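/- arXiv:1504.06459 — 3 statements merged into one kernel-verified Lean document; each statement's English description precedes it below -/
import Mathlib

section
/- The number of permutations lying on a geodesic between the identity and a product γ₁⋯γ_L of disjoint canonical full cycles on blocks of sizes p₁,…,p_L equals Cat_{p₁}·Cat_{p₂}·⋯·Cat_{p_L}, the product of Catalan numbers of the block sizes. -/
open Equiv Equiv.Perm Finset

/-- The minimal number of transpositions needed to write a permutation of
`{1,…,p}` as a product of transpositions. -/
noncomputable def transLen {p : ℕ} (π : Equiv.Perm (Fin p)) : ℕ :=
  sInf {n : ℕ | ∃ l : List (Equiv.Perm (Fin p)),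
    l.length = n ∧ (∀ τ ∈ l, τ.IsSwap) ∧ l.prod = π}

/-- The number of cycles of a permutation, counting fixed points as
(trivial) cycles. -/
def cycleCount {p : ℕ} (π : Equiv.Perm (Fin p)) : ℕ :=
  π.cycleType.card + (Finset.univ.filter fun x => π x = x).card

/-- The canonical full cycle `(p … 1)`, sending `i` to `i - 1` (mod `p`). -/
def gammaPerm (p : ℕ) : Equiv.Perm (Fin p) := (finRotate p)⁻¹

namespace Geo

variable {p : ℕ} {σ : Equiv.Perm (Fin p)} {a b x y z : Fin p}

lemma sc_iff_pow : σ.SameCycle x y ↔ ∃ i : ℕ, (σ ^ i) x = y := by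
  constructor
  · intro h
    obtain ⟨i, -, hi⟩ := h.exists_pow_eq'
    exact ⟨i, hi⟩
  · rintro ⟨i, hi⟩
    exact ⟨(i : ℤ), by simpa using hi⟩

lemma exists_per (σ : Equiv.Perm (Fin p)) (a : Fin p) : ∃ s, 0 < s ∧ (σ ^ s) a = a := by
  refine ⟨orderOf σ, orderOf_pos σ, ?_⟩
  rw [pow_orderOf_eq_one]; rfl

noncomputable def per (σ : Equiv.Perm (Fin p)) (a : Fin p) : ℕ :=
  Nat.find (exists_per σ a)

lemma per_pos : 0 < per σ a := (Nat.find_spec (exists_per σ a)).1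

lemma per_apply : (σ ^ per σ a) a = a := (Nat.find_spec (exists_per σ a)).2

lemma per_min {i : ℕ} (h0 : 0 < i) (hi : i < per σ a) : (σ ^ i) a ≠ a :=
  fun h => Nat.find_min (exists_per σ a) hi ⟨h0, h⟩

lemma pow_ne_pow {i j : ℕ} (hij : i < j) (hj : j < per σ a) :
    (σ ^ i) a ≠ (σ ^ j) a := by
  intro h
  have hmul : σ ^ (j - i) * σ ^ i = σ ^ j := by rw [← pow_add]; congr 1; omega
  have h1 : (σ ^ (j - i)) ((σ ^ j) a) = (σ ^ j) a := by
    conv_lhs => rw [← h]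
    rw [← mul_apply, hmul]
  have h2 : (σ ^ j) ((σ ^ (j - i)) a) = (σ ^ j) a := by
    rw [← mul_apply, (Commute.refl σ).pow_pow j (j - i), mul_apply, h1]
  exact per_min (by omega) (by omega) ((σ ^ j).injective h2)

lemma pow_mul_fix {k : ℕ} (hk : (σ ^ k) a = a) (q : ℕ) : (σ ^ (k * q)) a = a := by
  induction q with
  | zero => simp
  | succ n ih =>
    have : σ ^ (k * (n + 1)) = σ ^ k * σ ^ (k * n) := by rw [← pow_add]; congr 1; ring
    rw [this, mul_apply, ih, hk]

lemma pow_mod_eq {k j : ℕ} (hk : 0 < k) (hfix : (σ ^ k) a = a) :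
    (σ ^ j) a = (σ ^ (j % k)) a := by
  conv_lhs => rw [← Nat.mod_add_div j k]
  rw [pow_add, mul_apply, pow_mul_fix hfix]

lemma walk_eq {k : ℕ} (hnohit : ∀ i, 0 < i → i ≤ k → (σ ^ i) a ≠ a ∧ (σ ^ i) a ≠ b) :
    ((Equiv.swap a b * σ) ^ k) a = (σ ^ k) a := by
  induction k with
  | zero => rfl
  | succ n ih =>
    have hn := ih fun i hi hik => hnohit i hi (hik.trans (Nat.le_succ n))
    have hstep := hnohit (n + 1) (Nat.succ_pos n) le_rfl
    rw [pow_succ', mul_apply, hn, mul_apply,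
        Equiv.swap_apply_of_ne_of_ne]
    · rw [← mul_apply, ← pow_succ']
    · rw [← mul_apply, ← pow_succ']; exact hstep.1
    · rw [← mul_apply, ← pow_succ']; exact hstep.2

lemma pow_succ_apply (g : Equiv.Perm (Fin p)) (n : ℕ) (x : Fin p) :
    (g ^ (n + 1)) x = g ((g ^ n) x) := by rw [pow_succ', mul_apply]

lemma sc_merge_ab (hab : a ≠ b) (h : ¬ σ.SameCycle a b) :
    (Equiv.swap a b * σ).SameCycle a b := by
  have hpos := per_pos (σ := σ) (a := a)
  have hnohit : ∀ i, 0 < i → i ≤ per σ a - 1 → (σ ^ i) a ≠ a ∧ (σ ^ i) a ≠ b := by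
    intro i hi hile
    refine ⟨per_min hi (by omega), fun hb => h ⟨(i : ℤ), by simpa using hb⟩⟩
  have hw := walk_eq (b := b) hnohit
  refine sc_iff_pow.mpr ⟨per σ a, ?_⟩
  have hp : per σ a = (per σ a - 1) + 1 := by omega
  rw [hp, pow_succ_apply, hw, mul_apply, ← pow_succ_apply, ← hp, per_apply,
      Equiv.swap_apply_left]

lemma sc_merge_mono (hab : a ≠ b) (h : ¬ σ.SameCycle a b) (hxy : σ.SameCycle x y) :
    (Equiv.swap a b * σ).SameCycle x y := by
  obtain ⟨i, rfl⟩ := sc_iff_pow.mp hxy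
  clear hxy
  induction i with
  | zero => exact SameCycle.refl _ _
  | succ n ih =>
    refine ih.trans ?_
    rcases eq_or_ne (σ ((σ ^ n) x)) a with ha | ha
    · have h1 : (Equiv.swap a b * σ) ((σ ^ n) x) = b := by
        rw [mul_apply, ha, Equiv.swap_apply_left]
      have h2 : (Equiv.swap a b * σ).SameCycle ((σ ^ n) x) b := ⟨1, by simpa using h1⟩
      rw [pow_succ_apply, ha]
      exact h2.trans (sc_merge_ab hab h).symm
    rcases eq_or_ne (σ ((σ ^ n) x)) b with hb | hb
    · have h1 : (Equiv.swap a b * σ) ((σ ^ n) x) = a := by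
        rw [mul_apply, hb, Equiv.swap_apply_right]
      have h2 : (Equiv.swap a b * σ).SameCycle ((σ ^ n) x) a := ⟨1, by simpa using h1⟩
      rw [pow_succ_apply, hb]
      exact h2.trans (sc_merge_ab hab h)
    · rw [pow_succ_apply]
      refine ⟨1, ?_⟩
      simp only [zpow_one, mul_apply]
      rw [Equiv.swap_apply_of_ne_of_ne ha hb]

lemma sc_merge_out (ha : ¬ σ.SameCycle x a) (hb : ¬ σ.SameCycle x b)
    (hxy : (Equiv.swap a b * σ).SameCycle x y) : σ.SameCycle x y := by
  obtain ⟨i, rfl⟩ := sc_iff_pow.mp hxy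
  have key : ∀ i : ℕ, ((Equiv.swap a b * σ) ^ i) x = (σ ^ i) x := by
    intro i; induction i with
    | zero => rfl
    | succ n ih =>
      have h1 : σ ((σ ^ n) x) ≠ a := fun hh =>
        ha ⟨((n + 1 : ℕ) : ℤ), by rw [zpow_natCast, pow_succ_apply]; exact hh⟩
      have h2 : σ ((σ ^ n) x) ≠ b := fun hh =>
        hb ⟨((n + 1 : ℕ) : ℤ), by rw [zpow_natCast, pow_succ_apply]; exact hh⟩
      rw [pow_succ_apply, ih, mul_apply, Equiv.swap_apply_of_ne_of_ne h1 h2]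
      exact (pow_succ_apply _ _ _).symm
  rw [key]
  exact ⟨(i : ℤ), by simp⟩

lemma sc_merge_iff (hab : a ≠ b) (h : ¬ σ.SameCycle a b) :
    (Equiv.swap a b * σ).SameCycle x y ↔
      σ.SameCycle x y ∨ (σ.SameCycle x a ∧ σ.SameCycle b y) ∨
        (σ.SameCycle x b ∧ σ.SameCycle a y) := by
  constructor
  · intro hxy
    by_cases hxa : σ.SameCycle x a
    · by_cases hya : σ.SameCycle y a
      · exact Or.inl (hxa.trans hya.symm)
      by_cases hyb : σ.SameCycle y b
      · exact Or.inr (Or.inl ⟨hxa, hyb.symm⟩)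
      · exact Or.inl (sc_merge_out hya hyb hxy.symm).symm
    by_cases hxb : σ.SameCycle x b
    · by_cases hyb : σ.SameCycle y b
      · exact Or.inl (hxb.trans hyb.symm)
      by_cases hya : σ.SameCycle y a
      · exact Or.inr (Or.inr ⟨hxb, hya.symm⟩)
      · exact Or.inl (sc_merge_out hya hyb hxy.symm).symm
    · exact Or.inl (sc_merge_out hxa hxb hxy)
  · rintro (h1 | ⟨h1, h2⟩ | ⟨h1, h2⟩)
    · exact sc_merge_mono hab h h1
    · exact ((sc_merge_mono hab h h1).trans (sc_merge_ab hab h)).trans (sc_merge_mono hab h h2)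
    · exact ((sc_merge_mono hab h h1).trans (sc_merge_ab hab h).symm).trans
        (sc_merge_mono hab h h2)

lemma sc_split_orbit {k : ℕ} (hk : 0 < k) (hks : k < per σ a) (z : Fin p) :
    (Equiv.swap a ((σ ^ k) a) * σ).SameCycle a z ↔ ∃ i < k, (σ ^ i) a = z := by
  set b := (σ ^ k) a with hb
  have hwalk : ∀ i, i < k → ((Equiv.swap a b * σ) ^ i) a = (σ ^ i) a := by
    intro i hik
    refine walk_eq fun j h0 hji => ⟨per_min h0 (by omega), hb ▸ pow_ne_pow (by omega) hks⟩
  have hka : ((Equiv.swap a b * σ) ^ k) a = a := by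
    have hk1 : k = (k - 1) + 1 := by omega
    rw [hk1, pow_succ_apply, hwalk (k - 1) (by omega), mul_apply, ← pow_succ_apply, ← hk1,
        ← hb, Equiv.swap_apply_right]
  constructor
  · intro hz
    obtain ⟨j, hj⟩ := sc_iff_pow.mp hz
    refine ⟨j % k, Nat.mod_lt _ hk, ?_⟩
    rw [← hwalk _ (Nat.mod_lt _ hk), ← pow_mod_eq hk hka, hj]
  · rintro ⟨i, hik, rfl⟩
    exact ⟨(i : ℤ), by rw [zpow_natCast, hwalk i hik]⟩

lemma exists_k (hab : a ≠ b) (h : σ.SameCycle a b) :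
    ∃ k, 0 < k ∧ k < per σ a ∧ (σ ^ k) a = b := by
  obtain ⟨j, hj⟩ := sc_iff_pow.mp h
  have hpos := per_pos (σ := σ) (a := a)
  refine ⟨j % per σ a, ?_, Nat.mod_lt _ hpos, by rw [← pow_mod_eq hpos per_apply, hj]⟩
  rcases Nat.eq_zero_or_pos (j % per σ a) with h0 | h0
  · exfalso
    apply hab
    rw [← hj, pow_mod_eq hpos per_apply, h0, pow_zero, Equiv.Perm.one_apply]
  · exact h0

lemma sc_split_not_ab (hab : a ≠ b) (h : σ.SameCycle a b) :
    ¬ (Equiv.swap a b * σ).SameCycle a b := by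
  obtain ⟨k, hk, hks, rfl⟩ := exists_k hab h
  rw [sc_split_orbit hk hks]
  rintro ⟨i, hik, hi⟩
  rcases Nat.eq_zero_or_pos i with h0 | h0
  · rw [h0, pow_zero, Equiv.Perm.one_apply] at hi
    exact per_min hk hks hi.symm
  · exact pow_ne_pow hik hks hi

lemma mul_swap_cancel (a b : Fin p) (σ : Equiv.Perm (Fin p)) :
    Equiv.swap a b * (Equiv.swap a b * σ) = σ := by
  rw [← mul_assoc, Equiv.swap_mul_self, one_mul]

lemma sc_split_iff (hab : a ≠ b) (h : σ.SameCycle a b) :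
    σ.SameCycle x y ↔ (Equiv.swap a b * σ).SameCycle x y ∨
      ((Equiv.swap a b * σ).SameCycle x a ∧ (Equiv.swap a b * σ).SameCycle b y) ∨
        ((Equiv.swap a b * σ).SameCycle x b ∧ (Equiv.swap a b * σ).SameCycle a y) := by
  conv_lhs => rw [← mul_swap_cancel a b σ]
  exact sc_merge_iff hab (sc_split_not_ab hab h)

/-! ### classes -/

noncomputable def cls (σ : Equiv.Perm (Fin p)) (x : Fin p) : Finset (Fin p) :=
  univ.filter fun y => σ.SameCycle x y

noncomputable def classes (σ : Equiv.Perm (Fin p)) : Finset (Finset (Fin p)) :=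
  univ.image (cls σ)

lemma mem_cls : y ∈ cls σ x ↔ σ.SameCycle x y := by simp [cls]

lemma self_mem_cls : x ∈ cls σ x := mem_cls.mpr (SameCycle.refl _ _)

lemma cls_nonempty : (cls σ x).Nonempty := ⟨x, self_mem_cls⟩

lemma cls_card_pos : 0 < (cls σ x).card := Finset.card_pos.mpr cls_nonempty

lemma cls_eq_of_sc (h : σ.SameCycle x y) : cls σ x = cls σ y :=
  Finset.ext fun z => by
    simp only [mem_cls]
    exact ⟨fun hz => h.symm.trans hz, fun hz => h.trans hz⟩

lemma sc_of_cls_eq (h : cls σ x = cls σ y) : σ.SameCycle x y := by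
  have hy : y ∈ cls σ x := by rw [h]; exact self_mem_cls
  exact mem_cls.mp hy

lemma cls_fixed (h : σ x = x) : cls σ x = {x} :=
  Finset.ext fun z => by
    simp only [mem_cls, Finset.mem_singleton]
    exact ⟨fun hz => (hz.eq_of_left h).symm, fun hz => hz ▸ SameCycle.refl _ _⟩

lemma cls_mem_classes (σ : Equiv.Perm (Fin p)) (x : Fin p) : cls σ x ∈ classes σ :=
  Finset.mem_image_of_mem _ (Finset.mem_univ x)

lemma mem_classes_iff {C : Finset (Fin p)} : C ∈ classes σ ↔ ∃ x, cls σ x = C := by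
  simp [classes]

lemma fiber_eq_class {C : Finset (Fin p)} (hC : C ∈ classes σ) :
    univ.filter (fun x => cls σ x = C) = C := by
  obtain ⟨x₀, rfl⟩ := mem_classes_iff.mp hC
  ext z
  simp only [Finset.mem_filter, Finset.mem_univ, true_and, mem_cls]
  exact ⟨fun h => (sc_of_cls_eq h).symm, fun h => cls_eq_of_sc h.symm⟩

lemma sum_classes_card (σ : Equiv.Perm (Fin p)) : ∑ C ∈ classes σ, C.card = p := by
  have := Finset.card_eq_sum_card_fiberwise
    (f := cls σ) (s := (univ : Finset (Fin p))) (t := classes σ)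
    (fun x _ => cls_mem_classes σ x)
  simp only [Finset.card_univ, Fintype.card_fin] at this
  have h2 : ∑ C ∈ classes σ, C.card
      = ∑ C ∈ classes σ, (univ.filter fun x => cls σ x = C).card :=
    Finset.sum_congr rfl fun C hC => by rw [fiber_eq_class hC]
  rw [h2]
  exact this.symm

noncomputable def len (σ : Equiv.Perm (Fin p)) : ℕ := ∑ C ∈ classes σ, (C.card - 1)

noncomputable def Rr (σ : Equiv.Perm (Fin p)) : ℕ := ∏ C ∈ classes σ, catalan C.card

lemma len_add_card_classes (σ : Equiv.Perm (Fin p)) : len σ + (classes σ).card = p := by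
  have h1 : ∑ C ∈ classes σ, ((C.card - 1) + 1) = len σ + (classes σ).card := by
    rw [Finset.sum_add_distrib]
    simp [len]
  have h3 : ∑ C ∈ classes σ, ((C.card - 1) + 1) = ∑ C ∈ classes σ, C.card := by
    refine Finset.sum_congr rfl fun C hC => ?_
    obtain ⟨x, rfl⟩ := mem_classes_iff.mp hC
    have := cls_card_pos (σ := σ) (x := x)
    omega
  rw [← h1, h3]
  exact sum_classes_card σ

lemma len_inv (σ : Equiv.Perm (Fin p)) : len σ⁻¹ = len σ := by
  have hcls : cls σ⁻¹ = cls σ := by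
    funext x; exact Finset.ext fun z => by simp [mem_cls, sameCycle_inv]
  unfold len classes
  rw [hcls]

lemma classes_one_card {C : Finset (Fin p)} (hC : C ∈ classes (1 : Equiv.Perm (Fin p))) :
    C.card = 1 := by
  obtain ⟨x, rfl⟩ := mem_classes_iff.mp hC
  rw [cls_fixed (by rfl), Finset.card_singleton]

lemma len_one : len (1 : Equiv.Perm (Fin p)) = 0 :=
  Finset.sum_eq_zero fun C hC => by simp [classes_one_card hC]

lemma len_eq_zero {σ : Equiv.Perm (Fin p)} (h : len σ = 0) : σ = 1 := by
  ext x
  have hx : cls σ x ∈ classes σ := cls_mem_classes σ x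
  have h1 : (cls σ x).card - 1 = 0 := by
    rw [len] at h
    exact Finset.sum_eq_zero_iff.mp h _ hx
  have h2 : (cls σ x).card = 1 := by have := cls_card_pos (σ := σ) (x := x); omega
  obtain ⟨c, hc⟩ := Finset.card_eq_one.mp h2
  have hxc : x ∈ cls σ x := self_mem_cls
  have hsx : σ x ∈ cls σ x := mem_cls.mpr ⟨1, by simp⟩
  rw [hc, Finset.mem_singleton] at hxc hsx
  simp [hsx, hxc.symm]

/-! ### split bookkeeping -/

lemma sc_split_forget (hab : a ≠ b) (h : σ.SameCycle a b)
    (hxy : (Equiv.swap a b * σ).SameCycle x y) : σ.SameCycle x y := by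
  have := sc_merge_mono hab (sc_split_not_ab hab h) hxy
  rwa [mul_swap_cancel] at this

lemma cls_split_unchanged (hab : a ≠ b) (h : σ.SameCycle a b) (hxa : ¬ σ.SameCycle x a) :
    cls (Equiv.swap a b * σ) x = cls σ x := by
  ext z
  simp only [mem_cls]
  constructor
  · exact sc_split_forget hab h
  · intro hxz
    rcases (sc_split_iff hab h).mp hxz with h1 | ⟨h1, h2⟩ | ⟨h1, h2⟩
    · exact h1
    · exact absurd (sc_split_forget hab h h1) hxa
    · exact absurd ((sc_split_forget hab h h1).trans h.symm) hxa

lemma cls_split_union (hab : a ≠ b) (h : σ.SameCycle a b) :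
    cls σ a = cls (Equiv.swap a b * σ) a ∪ cls (Equiv.swap a b * σ) b := by
  ext z
  simp only [mem_cls, Finset.mem_union]
  constructor
  · intro hz
    rcases (sc_split_iff hab h).mp hz with h1 | ⟨h1, h2⟩ | ⟨h1, h2⟩
    · exact Or.inl h1
    · exact Or.inr h2
    · exact Or.inl h2
  · rintro (hz | hz)
    · exact sc_split_forget hab h hz
    · exact h.trans (sc_split_forget hab h hz)

lemma cls_split_disjoint (hab : a ≠ b) (h : σ.SameCycle a b) :
    Disjoint (cls (Equiv.swap a b * σ) a) (cls (Equiv.swap a b * σ) b) := by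
  rw [Finset.disjoint_left]
  intro z hza hzb
  exact sc_split_not_ab hab h ((mem_cls.mp hza).trans (mem_cls.mp hzb).symm)

lemma cls_split_card (hab : a ≠ b) (h : σ.SameCycle a b) :
    (cls (Equiv.swap a b * σ) a).card + (cls (Equiv.swap a b * σ) b).card
      = (cls σ a).card := by
  rw [cls_split_union hab h, Finset.card_union_of_disjoint (cls_split_disjoint hab h)]

lemma cls_split_a_notmem (hab : a ≠ b) (h : σ.SameCycle a b) :
    cls (Equiv.swap a b * σ) a ∉
      insert (cls (Equiv.swap a b * σ) b) ((classes σ).erase (cls σ a)) := by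
  intro hmem
  rcases Finset.mem_insert.mp hmem with h1 | h1
  · exact sc_split_not_ab hab h (sc_of_cls_eq h1)
  · obtain ⟨hne, hcl⟩ := Finset.mem_erase.mp h1
    obtain ⟨x, hx⟩ := mem_classes_iff.mp hcl
    have ha : a ∈ cls σ x := by rw [hx]; exact self_mem_cls
    exact hne (by rw [← hx]; exact cls_eq_of_sc (mem_cls.mp ha))

lemma cls_split_b_notmem (hab : a ≠ b) (h : σ.SameCycle a b) :
    cls (Equiv.swap a b * σ) b ∉ (classes σ).erase (cls σ a) := by
  intro h1
  obtain ⟨hne, hcl⟩ := Finset.mem_erase.mp h1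
  obtain ⟨x, hx⟩ := mem_classes_iff.mp hcl
  have hbm : b ∈ cls σ x := by rw [hx]; exact self_mem_cls
  have hscb : σ.SameCycle x b := mem_cls.mp hbm
  exact hne (by rw [← hx]; exact cls_eq_of_sc (hscb.trans h.symm))

lemma classes_split_eq (hab : a ≠ b) (h : σ.SameCycle a b) :
    classes (Equiv.swap a b * σ) =
      insert (cls (Equiv.swap a b * σ) a)
        (insert (cls (Equiv.swap a b * σ) b) ((classes σ).erase (cls σ a))) := by
  ext C
  constructor
  · intro hC
    obtain ⟨x, rfl⟩ := mem_classes_iff.mp hC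
    by_cases hxa : (Equiv.swap a b * σ).SameCycle x a
    · exact Finset.mem_insert.mpr (Or.inl (cls_eq_of_sc hxa))
    by_cases hxb : (Equiv.swap a b * σ).SameCycle x b
    · exact Finset.mem_insert.mpr (Or.inr (Finset.mem_insert.mpr
        (Or.inl (cls_eq_of_sc hxb))))
    · have hsxa : ¬ σ.SameCycle x a := by
        intro hsc
        rcases (sc_split_iff hab h).mp hsc with h1 | ⟨h1, h2⟩ | ⟨h1, h2⟩
        · exact hxa h1
        · exact hxa h1
        · exact hxb h1
      refine Finset.mem_insert.mpr (Or.inr (Finset.mem_insert.mpr (Or.inr ?_)))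
      rw [cls_split_unchanged hab h hsxa]
      refine Finset.mem_erase.mpr ⟨fun heq => hsxa (sc_of_cls_eq heq), cls_mem_classes σ x⟩
  · intro hC
    rcases Finset.mem_insert.mp hC with rfl | hC
    · exact cls_mem_classes _ a
    rcases Finset.mem_insert.mp hC with rfl | hC
    · exact cls_mem_classes _ b
    · obtain ⟨hne, hcl⟩ := Finset.mem_erase.mp hC
      obtain ⟨x, rfl⟩ := mem_classes_iff.mp hcl
      have hsxa : ¬ σ.SameCycle x a := fun hsc => hne (cls_eq_of_sc hsc)
      rw [← cls_split_unchanged hab h hsxa]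
      exact cls_mem_classes _ x

lemma len_split (hab : a ≠ b) (h : σ.SameCycle a b) :
    len σ = len (Equiv.swap a b * σ) + 1 := by
  have hsum : len σ = ((cls σ a).card - 1)
      + ∑ C ∈ (classes σ).erase (cls σ a), (C.card - 1) :=
    (Finset.add_sum_erase _ _ (cls_mem_classes σ a)).symm
  have hsum' : len (Equiv.swap a b * σ) = ((cls (Equiv.swap a b * σ) a).card - 1)
      + (((cls (Equiv.swap a b * σ) b).card - 1)
        + ∑ C ∈ (classes σ).erase (cls σ a), (C.card - 1)) := by
    rw [len, classes_split_eq hab h, Finset.sum_insert (cls_split_a_notmem hab h),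
        Finset.sum_insert (cls_split_b_notmem hab h)]
  have hcard := cls_split_card hab h
  have h1 := cls_card_pos (σ := Equiv.swap a b * σ) (x := a)
  have h2 := cls_card_pos (σ := Equiv.swap a b * σ) (x := b)
  omega

lemma len_merge (hab : a ≠ b) (hn : ¬ σ.SameCycle a b) :
    len (Equiv.swap a b * σ) = len σ + 1 := by
  have := len_split (σ := Equiv.swap a b * σ) hab (sc_merge_ab hab hn)
  rwa [mul_swap_cancel] at this

lemma Rr_eq_mul_erase (σ : Equiv.Perm (Fin p)) (a : Fin p) :
    Rr σ = catalan (cls σ a).card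
      * ∏ C ∈ (classes σ).erase (cls σ a), catalan C.card :=
  (Finset.mul_prod_erase _ _ (cls_mem_classes σ a)).symm

lemma Rr_split (hab : a ≠ b) (h : σ.SameCycle a b) :
    Rr (Equiv.swap a b * σ) = catalan (cls (Equiv.swap a b * σ) a).card
      * (catalan (cls (Equiv.swap a b * σ) b).card
        * ∏ C ∈ (classes σ).erase (cls σ a), catalan C.card) := by
  rw [Rr, classes_split_eq hab h, Finset.prod_insert (cls_split_a_notmem hab h),
      Finset.prod_insert (cls_split_b_notmem hab h)]

lemma classes_split_erase (hab : a ≠ b) (h : σ.SameCycle a b) :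
    (classes (Equiv.swap a b * σ)).erase (cls (Equiv.swap a b * σ) a)
      = insert (cls (Equiv.swap a b * σ) b) ((classes σ).erase (cls σ a)) := by
  rw [classes_split_eq hab h, Finset.erase_insert (cls_split_a_notmem hab h)]

lemma cls_eq_image (σ : Equiv.Perm (Fin p)) (a : Fin p) :
    cls σ a = (Finset.range (per σ a)).image fun i => (σ ^ i) a := by
  ext z
  simp only [mem_cls, Finset.mem_image, Finset.mem_range]
  constructor
  · intro hz
    obtain ⟨j, hj⟩ := sc_iff_pow.mp hz
    exact ⟨j % per σ a, Nat.mod_lt _ per_pos,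
      by rw [← pow_mod_eq per_pos per_apply, hj]⟩
  · rintro ⟨i, _, rfl⟩
    exact ⟨(i : ℤ), by simp⟩

lemma pow_injOn {i j : ℕ} (hi : i < per σ a) (hj : j < per σ a)
    (hij : (σ ^ i) a = (σ ^ j) a) : i = j := by
  rcases lt_trichotomy i j with h | h | h
  · exact absurd hij (pow_ne_pow h hj)
  · exact h
  · exact absurd hij.symm (pow_ne_pow h hi)

lemma cls_card_eq_per (σ : Equiv.Perm (Fin p)) (a : Fin p) :
    (cls σ a).card = per σ a := by
  rw [cls_eq_image, Finset.card_image_of_injOn, Finset.card_range]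
  intro i hi j hj hij
  exact pow_injOn (Finset.mem_range.mp hi) (Finset.mem_range.mp hj) hij

lemma cls_split_a_card {k : ℕ} (hk : 0 < k) (hks : k < per σ a) :
    (cls (Equiv.swap a ((σ ^ k) a) * σ) a).card = k := by
  have himg : cls (Equiv.swap a ((σ ^ k) a) * σ) a
      = (Finset.range k).image fun i => (σ ^ i) a := by
    ext z
    simp only [mem_cls, Finset.mem_image, Finset.mem_range]
    rw [sc_split_orbit hk hks]
  rw [himg, Finset.card_image_of_injOn, Finset.card_range]
  intro i hi j hj hij
  exact pow_injOn ((Finset.mem_range.mp hi).trans hks) ((Finset.mem_range.mp hj).trans hks) hij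

lemma one_lt_per (h : σ a ≠ a) : 1 < per σ a := by
  have hpos := per_pos (σ := σ) (a := a)
  by_contra h1
  have he : per σ a = 1 := by omega
  have hp := per_apply (σ := σ) (a := a)
  rw [he, pow_one] at hp
  exact h hp

/-! ### transLen = len -/

lemma len_swap_mul_le (hτ : Equiv.Perm.IsSwap τ') (σ : Equiv.Perm (Fin p)) :
    len (τ' * σ) ≤ len σ + 1 := by
  obtain ⟨a, b, hab, rfl⟩ := hτ
  by_cases h : σ.SameCycle a b
  · have := len_split hab h
    omega
  · have := len_merge hab h
    omega

lemma len_list_prod_le (l : List (Equiv.Perm (Fin p))) (hsw : ∀ τ' ∈ l, τ'.IsSwap) :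
    len l.prod ≤ l.length := by
  induction l with
  | nil => simp [len_one]
  | cons τ' l' ih =>
    rw [List.prod_cons]
    have h1 := len_swap_mul_le (hsw τ' (by simp)) l'.prod
    have h2 := ih fun x hx => hsw x (by simp [hx])
    simp only [List.length_cons]
    omega

lemma exists_swap_list (n : ℕ) : ∀ σ : Equiv.Perm (Fin p), len σ ≤ n →
    ∃ l : List (Equiv.Perm (Fin p)),
      (∀ τ' ∈ l, τ'.IsSwap) ∧ l.prod = σ ∧ l.length = len σ := by
  induction n with
  | zero =>
    intro σ hσ
    have : σ = 1 := len_eq_zero (by omega)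
    subst this
    exact ⟨[], by simp, by simp, by simp [len_one]⟩
  | succ n ih =>
    intro σ hσ
    by_cases h1 : σ = 1
    · subst h1
      exact ⟨[], by simp, by simp, by simp [len_one]⟩
    · obtain ⟨x, hx⟩ : ∃ x, σ x ≠ x := by
        by_contra hc
        push_neg at hc
        exact h1 (Equiv.ext fun x => by rw [hc x]; rfl)
      have hsc : σ.SameCycle x (σ x) := ⟨1, by simp⟩
      have hxs : x ≠ σ x := fun h => hx h.symm
      have hspl := len_split hxs hsc
      obtain ⟨l', h1', h2', h3'⟩ := ih (Equiv.swap x (σ x) * σ) (by omega)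
      refine ⟨Equiv.swap x (σ x) :: l', ?_, ?_, ?_⟩
      · intro τ' hτ'
        rcases List.mem_cons.mp hτ' with rfl | hm
        · exact ⟨x, σ x, hxs, rfl⟩
        · exact h1' _ hm
      · rw [List.prod_cons, h2', mul_swap_cancel]
      · simp only [List.length_cons, h3']
        omega

lemma transLen_eq_len (σ : Equiv.Perm (Fin p)) : transLen σ = len σ := by
  obtain ⟨l, hsw, hprod, hlen⟩ := exists_swap_list (len σ) σ le_rfl
  apply le_antisymm
  · exact Nat.sInf_le ⟨l, hlen, hsw, hprod⟩
  · refine le_csInf ⟨len σ, l, hlen, hsw, hprod⟩ ?_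
    rintro n ⟨l', hl', hsw', hp'⟩
    rw [← hl', ← hp']
    exact len_list_prod_le l' hsw'

lemma len_mul_le (σ ρ : Equiv.Perm (Fin p)) : len (σ * ρ) ≤ len σ + len ρ := by
  obtain ⟨l₁, hsw₁, hp₁, hl₁⟩ := exists_swap_list (len σ) σ le_rfl
  obtain ⟨l₂, hsw₂, hp₂, hl₂⟩ := exists_swap_list (len ρ) ρ le_rfl
  have h := len_list_prod_le (l₁ ++ l₂) fun τ' hτ' => by
    rcases List.mem_append.mp hτ' with h | h
    · exact hsw₁ _ h
    · exact hsw₂ _ h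
  rw [List.prod_append, hp₁, hp₂, List.length_append, hl₁, hl₂] at h
  exact h

/-! ### geodesic prefixes refine cycles -/

lemma prefix_len_eq (l₁ l₂ : List (Equiv.Perm (Fin p)))
    (hsw₁ : ∀ τ' ∈ l₁, τ'.IsSwap) (hsw₂ : ∀ τ' ∈ l₂, τ'.IsSwap)
    (hgeo : len (l₁.prod * l₂.prod) = l₁.length + l₂.length) :
    len l₁.prod = l₁.length := by
  have h1 := len_list_prod_le l₁ hsw₁
  have h2 := len_list_prod_le l₂ hsw₂
  have h3 := len_mul_le l₁.prod l₂.prod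
  omega

lemma sc_chain (l₂ : List (Equiv.Perm (Fin p))) : ∀ l₁ : List (Equiv.Perm (Fin p)),
    (∀ τ' ∈ l₁, τ'.IsSwap) → (∀ τ' ∈ l₂, τ'.IsSwap) →
    len (l₁.prod * l₂.prod) = l₁.length + l₂.length →
    (l₁.prod).SameCycle x y → (l₁.prod * l₂.prod).SameCycle x y := by
  induction l₂ with
  | nil => intro l₁ _ _ _ h; simpa using h
  | cons τ' l₂' ih =>
    intro l₁ hsw₁ hsw₂ hgeo hxy
    obtain ⟨a, b, hab, hτ'⟩ := hsw₂ τ' (by simp)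
    have hstep : (l₁.prod * τ').SameCycle x y := by
      -- l₁.prod * τ' = swap (ρ a) (ρ b) * ρ
      have hrw : l₁.prod * τ' = Equiv.swap (l₁.prod a) (l₁.prod b) * l₁.prod := by
        rw [hτ', mul_swap_eq_swap_mul]
      have hab' : l₁.prod a ≠ l₁.prod b := fun h => hab (l₁.prod.injective h)
      have hlen1 : len l₁.prod = l₁.length :=
        prefix_len_eq l₁ (τ' :: l₂') hsw₁ hsw₂ hgeo
      have hlen2 : len (l₁.prod * τ') = l₁.length + 1 := by
        have := prefix_len_eq (l₁ ++ [τ']) l₂'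
          (fun x hx => by
            rcases List.mem_append.mp hx with h | h
            · exact hsw₁ _ h
            · simp at h; subst h; exact ⟨a, b, hab, hτ'⟩)
          (fun x hx => hsw₂ x (by simp [hx]))
          (by
            rw [List.prod_append, List.length_append, List.prod_singleton,
                List.length_singleton, mul_assoc]
            rw [List.prod_cons] at hgeo
            simp only [List.length_cons] at hgeo
            omega)
        rw [List.prod_append, List.length_append, List.prod_singleton,
            List.length_singleton] at this
        exact this
      have hmerge : ¬ (l₁.prod).SameCycle (l₁.prod a) (l₁.prod b) := by
        intro hscab
        have := len_split hab' hscab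
        rw [← hrw] at this
        omega
      rw [hrw]
      exact sc_merge_mono hab' hmerge hxy
    have := ih (l₁ ++ [τ'])
      (fun x hx => by
        rcases List.mem_append.mp hx with h | h
        · exact hsw₁ _ h
        · simp at h; subst h; exact ⟨a, b, hab, hτ'⟩)
      (fun x hx => hsw₂ x (by simp [hx]))
      (by
        rw [List.prod_append, List.length_append, List.prod_singleton,
            List.length_singleton, mul_assoc]
        rw [List.prod_cons] at hgeo
        simp only [List.length_cons] at hgeo
        omega)
      (by rw [List.prod_append, List.prod_singleton]; exact hstep)
    rw [List.prod_append, List.prod_singleton] at this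
    rw [List.prod_cons, ← mul_assoc]
    exact this

lemma geo_sc_mono {π ς : Equiv.Perm (Fin p)} (hgeo : len (π⁻¹ * ς) + len π = len ς)
    (hxy : π.SameCycle x y) : ς.SameCycle x y := by
  obtain ⟨l₁, hsw₁, hp₁, hl₁⟩ := exists_swap_list (len π) π le_rfl
  obtain ⟨l₂, hsw₂, hp₂, hl₂⟩ := exists_swap_list (len (π⁻¹ * ς)) (π⁻¹ * ς) le_rfl
  have hprod : l₁.prod * l₂.prod = ς := by rw [hp₁, hp₂, mul_inv_cancel_left]
  have := sc_chain (x := x) (y := y) l₂ l₁ hsw₁ hsw₂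
    (by rw [hprod, hl₁, hl₂]; omega) (by rw [hp₁]; exact hxy)
  rwa [hprod] at this

lemma geo_fixed {π ς : Equiv.Perm (Fin p)} (hgeo : len (π⁻¹ * ς) + len π = len ς)
    (hx : ς x = x) : π x = x := by
  by_contra hne
  have h1 : π.SameCycle x (π x) := ⟨1, by simp⟩
  have h2 := geo_sc_mono hgeo h1
  exact hne (h2.eq_of_left hx).symm

/-! ### the geodesic counting sets -/

noncomputable def P (ς : Equiv.Perm (Fin p)) : Finset (Equiv.Perm (Fin p)) :=
  univ.filter fun π => len (π⁻¹ * ς) + len π = len ς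

lemma mem_P {π ς : Equiv.Perm (Fin p)} :
    π ∈ P ς ↔ len (π⁻¹ * ς) + len π = len ς := by simp [P]

lemma P_one : P (1 : Equiv.Perm (Fin p)) = {1} := by
  ext π
  rw [mem_P, Finset.mem_singleton, mul_one, len_inv, len_one]
  constructor
  · intro h
    exact len_eq_zero (by omega)
  · rintro rfl
    simp [len_one]

lemma Rr_one : Rr (1 : Equiv.Perm (Fin p)) = 1 :=
  Finset.prod_eq_one fun C hC => by rw [classes_one_card hC, catalan_one]

lemma Pf_all {ς : Equiv.Perm (Fin p)} {x₀ : Fin p} (h : ς x₀ = x₀) :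
    (P ς).filter (fun π => π x₀ = x₀) = P ς :=
  Finset.filter_eq_self.mpr fun π hπ => geo_fixed (mem_P.mp hπ) h

lemma conj_helper (π ρ : Equiv.Perm (Fin p)) (u v : Fin p) :
    π⁻¹ * (Equiv.swap u v * ρ) = Equiv.swap (π⁻¹ u) (π⁻¹ v) * (π⁻¹ * ρ) := by
  rw [Equiv.swap_apply_apply π⁻¹ u v]
  group

lemma E2 {ς : Equiv.Perm (Fin p)} {x₀ : Fin p} (h : ς x₀ ≠ x₀) :
    (P ς).filter (fun π => π x₀ = x₀) = P (Equiv.swap x₀ (ς x₀) * ς) := by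
  have hx₀ : x₀ ≠ ς x₀ := fun he => h he.symm
  have hscς : ς.SameCycle x₀ (ς x₀) := ⟨1, by simp⟩
  have hlenς : len ς = len (Equiv.swap x₀ (ς x₀) * ς) + 1 := len_split hx₀ hscς
  ext π
  rw [Finset.mem_filter, mem_P, mem_P]
  constructor
  · rintro ⟨hg, hfix⟩
    have hinv : π⁻¹ x₀ = x₀ := by conv_lhs => rw [← hfix, ← Equiv.Perm.mul_apply, inv_mul_cancel, Equiv.Perm.one_apply]
    have hid : π⁻¹ * (Equiv.swap x₀ (ς x₀) * ς)
        = Equiv.swap x₀ (π⁻¹ (ς x₀)) * (π⁻¹ * ς) := by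
      rw [conj_helper, hinv]
    have hb : x₀ ≠ π⁻¹ (ς x₀) := by
      intro he
      apply h
      have := congrArg π he
      rw [hfix, ← Equiv.Perm.mul_apply, mul_inv_cancel, Equiv.Perm.one_apply] at this
      exact this.symm
    have hscρ : (π⁻¹ * ς).SameCycle x₀ (π⁻¹ (ς x₀)) := ⟨1, by simp [mul_apply, hinv]⟩
    have hsplit : len (π⁻¹ * ς)
        = len (Equiv.swap x₀ (π⁻¹ (ς x₀)) * (π⁻¹ * ς)) + 1 := len_split hb hscρ
    rw [hid]
    omega
  · intro hg
    have hfixς' : (Equiv.swap x₀ (ς x₀) * ς) x₀ = x₀ := by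
      rw [mul_apply, Equiv.swap_apply_right]
    have hfix : π x₀ = x₀ := geo_fixed hg hfixς'
    refine ⟨?_, hfix⟩
    have hinv : π⁻¹ x₀ = x₀ := by conv_lhs => rw [← hfix, ← Equiv.Perm.mul_apply, inv_mul_cancel, Equiv.Perm.one_apply]
    have hς : ς = Equiv.swap x₀ (ς x₀) * (Equiv.swap x₀ (ς x₀) * ς) :=
      (mul_swap_cancel _ _ _).symm
    have hid : π⁻¹ * ς
        = Equiv.swap x₀ (π⁻¹ (ς x₀)) * (π⁻¹ * (Equiv.swap x₀ (ς x₀) * ς)) := by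
      conv_lhs => rw [hς]
      rw [conj_helper, hinv]
    have hb : x₀ ≠ π⁻¹ (ς x₀) := by
      intro he
      apply h
      have := congrArg π he
      rw [hfix, ← Equiv.Perm.mul_apply, mul_inv_cancel, Equiv.Perm.one_apply] at this
      exact this.symm
    have hρfix : (π⁻¹ * (Equiv.swap x₀ (ς x₀) * ς)) x₀ = x₀ := by
      rw [mul_apply, hfixς', hinv]
    have hnsc : ¬ (π⁻¹ * (Equiv.swap x₀ (ς x₀) * ς)).SameCycle x₀ (π⁻¹ (ς x₀)) :=
      fun hsc => hb (hsc.eq_of_left hρfix)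
    have hmerge : len (π⁻¹ * ς)
        = len (π⁻¹ * (Equiv.swap x₀ (ς x₀) * ς)) + 1 := by
      rw [hid]
      exact len_merge hb hnsc
    omega

lemma E3 {ς : Equiv.Perm (Fin p)} {x₀ y : Fin p} (hsc : ς.SameCycle x₀ y) (hy : y ≠ x₀) :
    ((P ς).filter (fun π => π x₀ = y)).card
      = ((P (Equiv.swap x₀ y * ς)).filter (fun π => π x₀ = x₀)).card := by
  have hxy : x₀ ≠ y := hy.symm
  have hlenς : len ς = len (Equiv.swap x₀ y * ς) + 1 := len_split hxy hsc
  refine Finset.card_bij' (fun π _ => Equiv.swap x₀ y * π) (fun π' _ => Equiv.swap x₀ y * π')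
    ?_ ?_ ?_ ?_
  · intro π hπ
    beta_reduce
    rw [Finset.mem_filter, mem_P] at hπ
    obtain ⟨hg, hx⟩ := hπ
    have hscπ : π.SameCycle x₀ y := ⟨1, by simp [hx]⟩
    have hlπ : len π = len (Equiv.swap x₀ y * π) + 1 := len_split hxy hscπ
    have hid : (Equiv.swap x₀ y * π)⁻¹ * (Equiv.swap x₀ y * ς) = π⁻¹ * ς := by
      rw [mul_inv_rev, mul_assoc, Equiv.swap_inv, mul_swap_cancel]
    rw [Finset.mem_filter, mem_P, hid]
    constructor
    · omega
    · rw [mul_apply, hx, Equiv.swap_apply_right]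
  · intro π' hπ'
    beta_reduce
    rw [Finset.mem_filter, mem_P] at hπ'
    obtain ⟨hg, hx'⟩ := hπ'
    have hnsc : ¬ π'.SameCycle x₀ y := fun hsc' => hy (hsc'.eq_of_left hx').symm
    have hlπ : len (Equiv.swap x₀ y * π') = len π' + 1 := len_merge hxy hnsc
    have hid : (Equiv.swap x₀ y * π')⁻¹ * ς = π'⁻¹ * (Equiv.swap x₀ y * ς) := by
      rw [mul_inv_rev, mul_assoc, Equiv.swap_inv]
    rw [Finset.mem_filter, mem_P, hid]
    constructor
    · omega
    · rw [mul_apply, hx', Equiv.swap_apply_left]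
  · intro π _
    exact mul_swap_cancel _ _ _
  · intro π' _
    exact mul_swap_cancel _ _ _

lemma piece_pos {ς : Equiv.Perm (Fin p)} {x₀ : Fin p} (hx₀ : ς x₀ ≠ x₀) {k : ℕ}
    (hk : 0 < k) (hks : k < per ς x₀) :
    ∃ ς₂ : Equiv.Perm (Fin p),
      ((P ς).filter fun π => π x₀ = (ς ^ k) x₀).card = (P ς₂).card ∧
      len ς₂ + 1 ≤ len ς ∧
      Rr ς₂ = catalan (k - 1) * (catalan (per ς x₀ - k)
        * ∏ C ∈ (classes ς).erase (cls ς x₀), catalan C.card) := by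
  have hy : (ς ^ k) x₀ ≠ x₀ := per_min hk hks
  have hxy : x₀ ≠ (ς ^ k) x₀ := hy.symm
  have hsc : ς.SameCycle x₀ ((ς ^ k) x₀) := ⟨(k : ℤ), by rw [zpow_natCast]⟩
  have hA : (cls (Equiv.swap x₀ ((ς ^ k) x₀) * ς) x₀).card = k := cls_split_a_card hk hks
  have hsum := cls_split_card hxy hsc
  have hO : (cls ς x₀).card = per ς x₀ := cls_card_eq_per ς x₀
  have hlen1 : len ς = len (Equiv.swap x₀ ((ς ^ k) x₀) * ς) + 1 := len_split hxy hsc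
  have hcount := E3 hsc hy
  have hB : (cls (Equiv.swap x₀ ((ς ^ k) x₀) * ς) ((ς ^ k) x₀)).card = per ς x₀ - k := by
    omega
  have hRr1 : Rr (Equiv.swap x₀ ((ς ^ k) x₀) * ς)
      = catalan k * (catalan (per ς x₀ - k)
        * ∏ C ∈ (classes ς).erase (cls ς x₀), catalan C.card) := by
    rw [Rr_split hxy hsc, hA, hB]
  by_cases hfix : (Equiv.swap x₀ ((ς ^ k) x₀) * ς) x₀ = x₀
  · have h1 : (cls (Equiv.swap x₀ ((ς ^ k) x₀) * ς) x₀).card = 1 := by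
      rw [cls_fixed hfix, Finset.card_singleton]
    have hk1 : k = 1 := by omega
    refine ⟨Equiv.swap x₀ ((ς ^ k) x₀) * ς, ?_, by omega, ?_⟩
    · rw [hcount, Pf_all hfix]
    · rw [hRr1, hk1]
      simp [catalan_zero, catalan_one]
  · have hper2 : per (Equiv.swap x₀ ((ς ^ k) x₀) * ς) x₀ = k := by
      rw [← cls_card_eq_per, hA]
    have h1lt : 1 < per (Equiv.swap x₀ ((ς ^ k) x₀) * ς) x₀ := one_lt_per hfix
    have hsc2 : (Equiv.swap x₀ ((ς ^ k) x₀) * ς).SameCycle x₀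
        ((Equiv.swap x₀ ((ς ^ k) x₀) * ς) x₀) := ⟨1, by simp⟩
    have hxz : x₀ ≠ (Equiv.swap x₀ ((ς ^ k) x₀) * ς) x₀ := fun h => hfix h.symm
    have hlen2 : len (Equiv.swap x₀ ((ς ^ k) x₀) * ς)
        = len (Equiv.swap x₀ ((Equiv.swap x₀ ((ς ^ k) x₀) * ς) x₀)
          * (Equiv.swap x₀ ((ς ^ k) x₀) * ς)) + 1 := len_split hxz hsc2
    have hA2 : (cls (Equiv.swap x₀ ((Equiv.swap x₀ ((ς ^ k) x₀) * ς) x₀)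
        * (Equiv.swap x₀ ((ς ^ k) x₀) * ς)) x₀).card = 1 := by
      have := cls_split_a_card (σ := Equiv.swap x₀ ((ς ^ k) x₀) * ς) (a := x₀) (k := 1)
        one_pos (by omega)
      rwa [pow_one] at this
    have hsum2 := cls_split_card hxz hsc2
    have hB2 : (cls (Equiv.swap x₀ ((Equiv.swap x₀ ((ς ^ k) x₀) * ς) x₀)
        * (Equiv.swap x₀ ((ς ^ k) x₀) * ς)) ((Equiv.swap x₀ ((ς ^ k) x₀) * ς) x₀)).card
        = k - 1 := by omega
    have herase := classes_split_erase hxy hsc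
    have hmid : ∏ C ∈ (classes (Equiv.swap x₀ ((ς ^ k) x₀) * ς)).erase
        (cls (Equiv.swap x₀ ((ς ^ k) x₀) * ς) x₀), catalan C.card
        = catalan (per ς x₀ - k)
          * ∏ C ∈ (classes ς).erase (cls ς x₀), catalan C.card := by
      rw [herase, Finset.prod_insert (cls_split_b_notmem hxy hsc), hB]
    refine ⟨Equiv.swap x₀ ((Equiv.swap x₀ ((ς ^ k) x₀) * ς) x₀)
      * (Equiv.swap x₀ ((ς ^ k) x₀) * ς), ?_, by omega, ?_⟩
    · rw [hcount, E2 hfix]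
    · rw [Rr_split hxz hsc2, hA2, hB2, hmid, catalan_one, one_mul]

lemma catalan_sum (s : ℕ) (hs : 1 ≤ s) :
    ∑ k ∈ Finset.range s,
      (if k = 0 then catalan (s - 1) else catalan (k - 1) * catalan (s - k))
      = catalan s := by
  obtain ⟨m, rfl⟩ : ∃ m, s = m + 1 := ⟨s - 1, by omega⟩
  simp only [Nat.add_sub_cancel]
  rw [Finset.sum_range_succ']
  have h1 : ∀ i ∈ Finset.range m,
      (if i + 1 = 0 then catalan m else catalan (i + 1 - 1) * catalan (m + 1 - (i + 1)))
        = catalan i * catalan (m - i) := fun i hi => by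
    simp [Nat.succ_sub_succ]
  rw [Finset.sum_congr rfl h1]
  simp only [if_pos rfl]
  rw [catalan_succ,
      Fin.sum_univ_eq_sum_range (fun i => catalan i * catalan (m - i)) (m + 1),
      Finset.sum_range_succ]
  simp

theorem main_aux : ∀ (n : ℕ) (ς : Equiv.Perm (Fin p)), len ς ≤ n → (P ς).card = Rr ς := by
  intro n
  induction n with
  | zero =>
    intro ς h
    have h1 : ς = 1 := len_eq_zero (Nat.le_zero.mp h)
    subst h1
    rw [P_one, Rr_one, Finset.card_singleton]
  | succ n ih =>
    intro ς hn
    by_cases h1 : ς = 1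
    · subst h1
      rw [P_one, Rr_one, Finset.card_singleton]
    obtain ⟨x₀, hx₀⟩ : ∃ x, ς x ≠ x := by
      by_contra hc
      push_neg at hc
      exact h1 (Equiv.ext fun x => by rw [hc x]; rfl)
    have hs1 : 1 < per ς x₀ := one_lt_per hx₀
    have hfib : (P ς).card
        = ∑ y ∈ (univ : Finset (Fin p)), ((P ς).filter fun π => π x₀ = y).card :=
      Finset.card_eq_sum_card_fiberwise fun π _ => Finset.mem_univ _
    have hsub : ∑ y ∈ cls ς x₀, ((P ς).filter fun π => π x₀ = y).card
        = ∑ y ∈ (univ : Finset (Fin p)), ((P ς).filter fun π => π x₀ = y).card := by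
      refine Finset.sum_subset (Finset.subset_univ _) ?_
      intro y _ hy
      rw [Finset.card_eq_zero, Finset.filter_eq_empty_iff]
      intro π hπ hval
      exact hy (mem_cls.mpr (geo_sc_mono (mem_P.mp hπ) ⟨1, by simp [hval]⟩))
    have hreindex : ∑ y ∈ cls ς x₀, ((P ς).filter fun π => π x₀ = y).card
        = ∑ k ∈ Finset.range (per ς x₀),
            ((P ς).filter fun π => π x₀ = (ς ^ k) x₀).card := by
      rw [cls_eq_image ς x₀]
      rw [Finset.sum_image]
      intro i hi j hj hij
      exact pow_injOn (Finset.mem_range.mp hi) (Finset.mem_range.mp hj) hij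
    have hterm : ∀ k ∈ Finset.range (per ς x₀),
        ((P ς).filter fun π => π x₀ = (ς ^ k) x₀).card
          = (if k = 0 then catalan (per ς x₀ - 1)
              else catalan (k - 1) * catalan (per ς x₀ - k))
            * ∏ C ∈ (classes ς).erase (cls ς x₀), catalan C.card := by
      intro k hkr
      have hks : k < per ς x₀ := Finset.mem_range.mp hkr
      rcases Nat.eq_zero_or_pos k with rfl | hk
      · have hpow0 : ((P ς).filter fun π => π x₀ = (ς ^ 0) x₀)
            = (P ς).filter fun π => π x₀ = x₀ := by
          simp only [pow_zero, Equiv.Perm.one_apply]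
        rw [hpow0, if_pos rfl, E2 hx₀]
        have hx0' : x₀ ≠ ς x₀ := fun h => hx₀ h.symm
        have hsc0 : ς.SameCycle x₀ (ς x₀) := ⟨1, by simp⟩
        have hlen0 : len ς = len (Equiv.swap x₀ (ς x₀) * ς) + 1 := len_split hx0' hsc0
        have hA0 : (cls (Equiv.swap x₀ (ς x₀) * ς) x₀).card = 1 := by
          have := cls_split_a_card (σ := ς) (a := x₀) (k := 1) one_pos (by omega)
          rwa [pow_one] at this
        have hsum0 := cls_split_card hx0' hsc0
        have hO : (cls ς x₀).card = per ς x₀ := cls_card_eq_per ς x₀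
        have hB0 : (cls (Equiv.swap x₀ (ς x₀) * ς) (ς x₀)).card = per ς x₀ - 1 := by omega
        rw [ih _ (by omega), Rr_split hx0' hsc0, hA0, hB0, catalan_one, one_mul]
      · obtain ⟨ς₂, hcard, hlt, hRr⟩ := piece_pos hx₀ hk hks
        rw [hcard, ih ς₂ (by omega), hRr, if_neg (by omega)]
        ring
    have hO : (cls ς x₀).card = per ς x₀ := cls_card_eq_per ς x₀
    calc (P ς).card
        = ∑ k ∈ Finset.range (per ς x₀),
            ((P ς).filter fun π => π x₀ = (ς ^ k) x₀).card := by
          rw [hfib, ← hsub, hreindex]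
      _ = ∑ k ∈ Finset.range (per ς x₀),
            (if k = 0 then catalan (per ς x₀ - 1)
              else catalan (k - 1) * catalan (per ς x₀ - k))
            * ∏ C ∈ (classes ς).erase (cls ς x₀), catalan C.card :=
          Finset.sum_congr rfl hterm
      _ = (∑ k ∈ Finset.range (per ς x₀),
            (if k = 0 then catalan (per ς x₀ - 1)
              else catalan (k - 1) * catalan (per ς x₀ - k)))
            * ∏ C ∈ (classes ς).erase (cls ς x₀), catalan C.card := by
          rw [Finset.sum_mul]
      _ = catalan (per ς x₀)
            * ∏ C ∈ (classes ς).erase (cls ς x₀), catalan C.card := by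
          rw [catalan_sum (per ς x₀) (by omega)]
      _ = Rr ς := by rw [Rr_eq_mul_erase ς x₀, hO]

/-! ### relating classes to cycleType -/

lemma support_factor_eq_cls {σ c : Equiv.Perm (Fin p)} (hc : c ∈ σ.cycleFactorsFinset)
    {x : Fin p} (hx : x ∈ c.support) : c.support = cls σ x := by
  have hcx : c = σ.cycleOf x := Equiv.Perm.cycle_is_cycleOf hx hc
  have hxs : x ∈ σ.support := Equiv.Perm.mem_cycleFactorsFinset_support_le hc hx
  ext y
  rw [hcx, Equiv.Perm.mem_support_cycleOf_iff, mem_cls]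
  exact ⟨fun h => h.1, fun h => ⟨h, hxs⟩⟩

lemma cls_card_one_of_not {C : Finset (Fin p)} (hC : C ∈ classes σ) (h : ¬ 1 < C.card) :
    C.card = 1 := by
  obtain ⟨x, rfl⟩ := mem_classes_iff.mp hC
  have := cls_card_pos (σ := σ) (x := x)
  omega

lemma classes2_eq_image (σ : Equiv.Perm (Fin p)) :
    (classes σ).filter (fun C => 1 < C.card)
      = σ.cycleFactorsFinset.image (fun c => c.support) := by
  ext C
  rw [Finset.mem_filter, Finset.mem_image]
  constructor
  · rintro ⟨hC, hcard⟩
    obtain ⟨x, rfl⟩ := mem_classes_iff.mp hC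
    have hmx : σ x ≠ x := by
      intro hfx
      rw [cls_fixed hfx, Finset.card_singleton] at hcard
      omega
    have hxs : x ∈ σ.support := Equiv.Perm.mem_support.mpr hmx
    refine ⟨σ.cycleOf x, Equiv.Perm.cycleOf_mem_cycleFactorsFinset_iff.mpr hxs, ?_⟩
    have hx2 : x ∈ (σ.cycleOf x).support :=
      Equiv.Perm.mem_support_cycleOf_iff.mpr ⟨Equiv.Perm.SameCycle.refl _ _, hxs⟩
    exact support_factor_eq_cls (Equiv.Perm.cycleOf_mem_cycleFactorsFinset_iff.mpr hxs) hx2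
  · rintro ⟨c, hc, rfl⟩
    have hcyc : c.IsCycle := (Equiv.Perm.mem_cycleFactorsFinset_iff.mp hc).1
    have h2 : 2 ≤ c.support.card := hcyc.two_le_card_support
    obtain ⟨x, hx⟩ : c.support.Nonempty := Finset.card_pos.mp (by omega)
    refine ⟨?_, by omega⟩
    rw [support_factor_eq_cls hc hx]
    exact cls_mem_classes σ x

lemma factors_support_injOn (σ : Equiv.Perm (Fin p)) :
    Set.InjOn (fun c => Equiv.Perm.support c) (σ.cycleFactorsFinset : Set (Equiv.Perm (Fin p))) := by
  intro c₁ h₁ c₂ h₂ he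
  simp only at he
  have hcyc : c₁.IsCycle := (Equiv.Perm.mem_cycleFactorsFinset_iff.mp h₁).1
  obtain ⟨x, hx⟩ : c₁.support.Nonempty :=
    Finset.card_pos.mp (by have := hcyc.two_le_card_support; omega)
  have hx₂ : x ∈ c₂.support := he ▸ hx
  rw [Equiv.Perm.cycle_is_cycleOf hx h₁, Equiv.Perm.cycle_is_cycleOf hx₂ h₂]

lemma classes1_eq_image (σ : Equiv.Perm (Fin p)) :
    (classes σ).filter (fun C => ¬ 1 < C.card)
      = (univ.filter fun x => σ x = x).image (fun x => ({x} : Finset (Fin p))) := by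
  ext C
  rw [Finset.mem_filter, Finset.mem_image]
  constructor
  · rintro ⟨hC, hcard⟩
    have h1 : C.card = 1 := cls_card_one_of_not hC hcard
    obtain ⟨x, rfl⟩ := mem_classes_iff.mp hC
    have hfx : σ x = x := by
      have hx : x ∈ cls σ x := self_mem_cls
      have hsx : σ x ∈ cls σ x := mem_cls.mpr ⟨1, by simp⟩
      have := Finset.card_le_one.mp (by omega) _ hsx _ hx
      exact this
    exact ⟨x, Finset.mem_filter.mpr ⟨Finset.mem_univ _, hfx⟩, (cls_fixed hfx).symm⟩
  · rintro ⟨x, hx, rfl⟩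
    obtain ⟨-, hfx⟩ := Finset.mem_filter.mp hx
    refine ⟨?_, by simp⟩
    rw [← cls_fixed hfx]
    exact cls_mem_classes σ x

lemma card_classes_eq_cycleCount (σ : Equiv.Perm (Fin p)) :
    (classes σ).card = cycleCount σ := by
  rw [← Finset.card_filter_add_card_filter_not (s := classes σ)
    (p := fun C => 1 < C.card), cycleCount]
  congr 1
  · rw [classes2_eq_image, Finset.card_image_of_injOn (factors_support_injOn σ),
        Equiv.Perm.cycleType_def]
    simp
  · rw [classes1_eq_image, Finset.card_image_of_injective _ (fun x y h => by
      simpa using h)]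

lemma Rr_eq_cycleType_prod (σ : Equiv.Perm (Fin p)) :
    Rr σ = (σ.cycleType.map catalan).prod := by
  rw [Rr, ← Finset.prod_filter_mul_prod_filter_not (classes σ) (fun C => 1 < C.card)]
  have h2 : ∏ C ∈ (classes σ).filter (fun C => ¬ 1 < C.card), catalan C.card = 1 :=
    Finset.prod_eq_one fun C hC => by
      obtain ⟨hC1, hC2⟩ := Finset.mem_filter.mp hC
      rw [cls_card_one_of_not hC1 hC2, catalan_one]
  rw [h2, mul_one, classes2_eq_image, Finset.prod_image (factors_support_injOn σ),
      Equiv.Perm.cycleType_def, Multiset.map_map, Finset.prod_eq_multiset_prod]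
  rfl

lemma len_add_cycleCount (σ : Equiv.Perm (Fin p)) : len σ + cycleCount σ = p := by
  rw [← card_classes_eq_cycleCount]
  exact len_add_card_classes σ

end Geo

/-- The number of permutations `π` lying on a geodesic between the identity
and a permutation `ς` which is a product of disjoint cycles of lengths
`p₁,…,p_L` is the product of the Catalan numbers `Cat_{p_i}` (fixed points,
i.e. cycles of length one, contribute a factor `Cat_1 = 1`, so it suffices to
take the product over the cycle type). -/
theorem stmt6 (p : ℕ) (ς : Equiv.Perm (Fin p)) :
    Nat.card {π : Equiv.Perm (Fin p) //
      transLen (ς⁻¹ * π) + transLen π = p - cycleCount ς} =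
    (ς.cycleType.map catalan).prod := by
  classical
  have hcc := Geo.len_add_cycleCount ς
  have hcond : ∀ π : Equiv.Perm (Fin p),
      (transLen (ς⁻¹ * π) + transLen π = p - cycleCount ς)
        ↔ (Geo.len (π⁻¹ * ς) + Geo.len π = Geo.len ς) := by
    intro π
    rw [Geo.transLen_eq_len, Geo.transLen_eq_len]
    have h1 : Geo.len (ς⁻¹ * π) = Geo.len (π⁻¹ * ς) := by
      rw [← Geo.len_inv (π⁻¹ * ς), mul_inv_rev, inv_inv]
    have h2 : p - cycleCount ς = Geo.len ς := by omega
    rw [h1, h2]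
  rw [Nat.card_eq_fintype_card, Fintype.card_subtype]
  have hfil : (univ.filter fun π : Equiv.Perm (Fin p) =>
      transLen (ς⁻¹ * π) + transLen π = p - cycleCount ς) = Geo.P ς := by
    rw [Geo.P]
    exact Finset.filter_congr fun π _ => hcond π
  rw [hfil, Geo.main_aux (Geo.len ς) ς le_rfl, Geo.Rr_eq_cycleType_prod]
end

section
/- Associate to each permutation α ∈ 𝔖(p) the pair partition λ_α of {1,…,2p} obtained by replacing each cycle (i_l … i₁) of α with the product of transpositions (2i₁, 2i₂−1)(2i₂, 2i₃−1)⋯(2i_l, 2i₁−1). Then for every α ∈ 𝔖(p), ♯(α) + ♯(γ_p⁻¹α) = ♯(γ_{2p}⁻¹λ_α), where γ_p and γ_{2p} are the canonical full cycles on {1,…,p} and {1,…,2p} respectively. -/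
lemma cycleCount_eq {p : ℕ} (σ : Equiv.Perm (Fin p)) :
    cycleCount σ = σ.cycleType.card + (p - σ.cycleType.sum) := by
  unfold cycleCount
  congr 1
  have h := Finset.card_filter_add_card_filter_not
    (s := (Finset.univ : Finset (Fin p))) (p := fun x => σ x = x)
  have hs : σ.support = Finset.univ.filter (fun x => ¬ σ x = x) := by
    ext x; simp [Equiv.Perm.mem_support]
  rw [Equiv.Perm.sum_cycleType, hs]
  simp only [Finset.card_fin] at h ⊢
  omega

lemma cycleType_sum_le {p : ℕ} (σ : Equiv.Perm (Fin p)) : σ.cycleType.sum ≤ p := by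
  rw [Equiv.Perm.sum_cycleType]
  simpa using Finset.card_le_univ σ.support

lemma finRotate_val {n : ℕ} (hn : 0 < n) (x : Fin n) :
    (finRotate n x : ℕ) = ((x : ℕ) + 1) % n := by
  obtain ⟨m, rfl⟩ := Nat.exists_eq_succ_of_ne_zero hn.ne'
  rw [finRotate_succ_apply, Fin.add_def]
  simp only [Fin.val_one']
  conv_rhs => rw [Nat.add_mod, Nat.mod_eq_of_lt x.isLt]

lemma two_mul_mod {a p : ℕ} (h : a < p) : (2 * a + 1 + 1) % (2 * p) = 2 * ((a + 1) % p) := by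
  rcases eq_or_lt_of_le (Nat.succ_le_of_lt h) with h1 | h1
  · rw [show 2 * a + 1 + 1 = 2 * p by omega, Nat.mod_self, ← h1, Nat.mod_self]
  · rw [Nat.mod_eq_of_lt (by omega), Nat.mod_eq_of_lt h1]; omega

/-- The equivalence of `Fin p` with the even elements of `Fin (2p)`. -/
def evenEquiv (p : ℕ) : Fin p ≃ {x : Fin (2 * p) // (x : ℕ) % 2 = 0} where
  toFun m := ⟨⟨2 * (m : ℕ), by omega⟩, by simp [Nat.mul_mod_right]⟩
  invFun x := ⟨(x.1 : ℕ) / 2, by have := x.1.isLt; omega⟩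
  left_inv m := by ext; simp
  right_inv x := by
    ext
    have := x.2
    simp only
    omega

/-- The equivalence of `Fin p` with the odd elements of `Fin (2p)`. -/
def oddEquiv (p : ℕ) : Fin p ≃ {x : Fin (2 * p) // (x : ℕ) % 2 = 1} where
  toFun m := ⟨⟨2 * (m : ℕ) + 1, by omega⟩, show (2 * (m : ℕ) + 1) % 2 = 1 by omega⟩
  invFun x := ⟨(x.1 : ℕ) / 2, by have := x.1.isLt; omega⟩
  left_inv m := by ext; simp; omega
  right_inv x := by
    ext
    have := x.2
    simp only
    omega

/-- To `α ∈ 𝔖(p)` associate the even–odd pairing `λ_α` of `{1,…,2p}`: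
in `1`-indexed terms each cycle `(i_l … i₁)` of `α` contributes the
transpositions `(2i₁, 2i₂−1)(2i₂, 2i₃−1)⋯(2i_l, 2i₁−1)`; equivalently, in
`0`-indexed terms, `λ_α` sends `2m ↦ 2α(m)+1` and `2m+1 ↦ 2α⁻¹(m)` (these
conditions determine `λ_α` uniquely, and we take them as hypotheses on `l`).
Then `♯(α) + ♯(γ_p⁻¹α) = ♯(γ_{2p}⁻¹ λ_α)`. -/
theorem stmt15 (p : ℕ) (α : Equiv.Perm (Fin p)) (l : Equiv.Perm (Fin (2 * p)))
    (hl : ∀ m : Fin p,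
      l ⟨2 * (m : ℕ), by have := m.isLt; omega⟩ =
        ⟨2 * ((α m : ℕ)) + 1, by have := (α m).isLt; omega⟩ ∧
      l ⟨2 * (m : ℕ) + 1, by have := m.isLt; omega⟩ =
        ⟨2 * ((α⁻¹ m : ℕ)), by have := (α⁻¹ m).isLt; omega⟩) :
    cycleCount α + cycleCount ((gammaPerm p)⁻¹ * α) =
      cycleCount ((gammaPerm (2 * p))⁻¹ * l) := by
  set β := (gammaPerm p)⁻¹ * α with hβ
  set e1 := β.extendDomain (evenEquiv p) with he1
  set e2 := (α⁻¹).extendDomain (oddEquiv p) with he2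
  have key : (gammaPerm (2 * p))⁻¹ * l = e1 * e2 := by
    ext x
    have hx := x.isLt
    have hp : 0 < p := by omega
    simp only [gammaPerm, inv_inv, Equiv.Perm.mul_apply]
    by_cases hpar : (x : ℕ) % 2 = 0
    · set m : Fin p := ⟨(x : ℕ) / 2, by omega⟩ with hm
      have hx2 : x = ⟨2 * (m : ℕ), by have := m.isLt; omega⟩ := by ext; simp [hm]; omega
      have h2 : e2 x = x :=
        Equiv.Perm.extendDomain_apply_not_subtype _ _ (by omega)
      rw [h2, hx2, (hl m).1]
      have h1 : e1 ⟨2 * (m : ℕ), by have := m.isLt; omega⟩ = (evenEquiv p)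
          (β ((evenEquiv p).symm ⟨⟨2 * (m : ℕ), by have := m.isLt; omega⟩, by omega⟩)) :=
        Equiv.Perm.extendDomain_apply_subtype _ _ (by omega)
      rw [h1]
      have hsymm : ((evenEquiv p).symm ⟨⟨2 * (m : ℕ), by have := m.isLt; omega⟩, by omega⟩) = m := by
        ext; simp [evenEquiv]
      rw [hsymm]
      rw [finRotate_val (by omega)]
      simp only [evenEquiv, Equiv.coe_fn_mk, hβ, gammaPerm, inv_inv, Equiv.Perm.mul_apply]
      rw [finRotate_val hp]
      exact two_mul_mod (α m).isLt
    · set m : Fin p := ⟨(x : ℕ) / 2, by omega⟩ with hm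
      have hx2 : x = ⟨2 * (m : ℕ) + 1, by have := m.isLt; omega⟩ := by ext; simp [hm]; omega
      rw [hx2, (hl m).2]
      have h2 : e2 ⟨2 * (m : ℕ) + 1, by have := m.isLt; omega⟩ = (oddEquiv p)
          (α⁻¹ ((oddEquiv p).symm ⟨⟨2 * (m : ℕ) + 1, by have := m.isLt; omega⟩, by omega⟩)) :=
        Equiv.Perm.extendDomain_apply_subtype _ _ (by omega)
      rw [h2]
      have hsymm : ((oddEquiv p).symm ⟨⟨2 * (m : ℕ) + 1, by have := m.isLt; omega⟩, by omega⟩) = m := by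
        ext; simp [oddEquiv]; omega
      rw [hsymm]
      have h1 : e1 ((oddEquiv p) (α⁻¹ m)) = (oddEquiv p) (α⁻¹ m) :=
        Equiv.Perm.extendDomain_apply_not_subtype _ _ (by simp [oddEquiv])
      rw [h1]
      rw [finRotate_val (by omega)]
      simp only [oddEquiv, Equiv.coe_fn_mk]
      have := (α⁻¹ m).isLt
      rw [Nat.mod_eq_of_lt (by omega)]
  have hdisj : e1.Disjoint e2 := by
    intro x
    by_cases h : (x : ℕ) % 2 = 0
    · right; exact Equiv.Perm.extendDomain_apply_not_subtype _ _ (by omega)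
    · left; exact Equiv.Perm.extendDomain_apply_not_subtype _ _ (by omega)
  have hct : ((gammaPerm (2 * p))⁻¹ * l).cycleType = β.cycleType + α.cycleType := by
    rw [key, hdisj.cycleType_mul, he1, he2, Equiv.Perm.cycleType_extendDomain,
      Equiv.Perm.cycleType_extendDomain, Equiv.Perm.cycleType_inv]
  rw [cycleCount_eq, cycleCount_eq, cycleCount_eq, hct]
  have h1 := cycleType_sum_le α
  have h2 := cycleType_sum_le β
  simp only [Multiset.card_add, Multiset.sum_add]
  omega
end

section
/- Let ς ∈ 𝔖(q) (q ≥ 6) and let τ₁, τ₂, τ₃ be three disjoint transpositions such that multiplying successively gives cycle counts ♯(ς τ₁) = ♯(ς)+1, ♯(ς τ₁τ₂) = ♯(ς)+2, ♯(ς τ₁τ₂τ₃) = ♯(ς)+1. Then there exists a permutation π of the indices {1,2,3} such that ♯(ς τ_{π(1)}) = ♯(ς)+1, ♯(ς τ_{π(1)}τ_{π(2)}) = ♯(ς), and ♯(ς τ_{π(1)}τ_{π(2)}τ_{π(3)}) = ♯(ς)+1. -/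
open Equiv Equiv.Perm

namespace Stmt16

variable {q : ℕ}


lemma pow_mem_of_closed {f : Perm (Fin q)} {P : Finset (Fin q)}
    (hP : ∀ z ∈ P, f z ∈ P) {x : Fin q} (hx : x ∈ P) (i : ℕ) : (f ^ i) x ∈ P := by
  induction i with
  | zero => simpa
  | succ n ih =>
      rw [pow_succ', Perm.mul_apply]
      exact hP _ ih

lemma sameCycle_nat {f : Perm (Fin q)} {x y : Fin q} (h : f.SameCycle x y) :
    ∃ i : ℕ, (f ^ i) x = y := by
  obtain ⟨i, _, h⟩ := h.exists_pow_eq'; exact ⟨i, h⟩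

lemma sameCycle_of_pow {f : Perm (Fin q)} {x : Fin q} (i : ℕ) :
    f.SameCycle x ((f ^ i) x) := ⟨(i : ℤ), by rw [zpow_natCast]⟩

lemma iter_rel {f : Perm (Fin q)} {r : Fin q → Fin q → Prop}
    (hrefl : ∀ x, r x x) (htrans : ∀ {x y z : Fin q}, r x y → r y z → r x z)
    (hstep : ∀ z, r z (f z)) {x y : Fin q} (h : f.SameCycle x y) : r x y := by
  obtain ⟨i, rfl⟩ := sameCycle_nat h
  clear h
  induction i with
  | zero => simpa using hrefl x
  | succ n ih =>
      rw [pow_succ', Perm.mul_apply]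
      exact htrans ih (hstep _)

lemma split_le {σ : Perm (Fin q)} {a b : Fin q} (hab : σ.SameCycle a b)
    {x y : Fin q} (h : (σ * swap a b).SameCycle x y) : σ.SameCycle x y := by
  refine iter_rel (fun x => SameCycle.refl σ x) (fun h1 h2 => h1.trans h2)
    (fun z => ?_) h
  have happ : (σ * swap a b) z = σ (swap a b z) := Perm.mul_apply _ _ _
  rcases eq_or_ne z a with rfl | hza
  · rw [happ, swap_apply_left]
    exact hab.trans ⟨1, by simp⟩
  rcases eq_or_ne z b with rfl | hzb
  · rw [happ, swap_apply_right]
    exact hab.symm.trans ⟨1, by simp⟩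
  · rw [happ, swap_apply_of_ne_of_ne hza hzb]
    exact ⟨1, by simp⟩

lemma loc_sameCycle {σ : Perm (Fin q)} {a b x y : Fin q} (hxa : ¬σ.SameCycle x a)
    (hxb : ¬σ.SameCycle x b) (h : σ.SameCycle x y) : (σ * swap a b).SameCycle x y := by
  obtain ⟨i, rfl⟩ := sameCycle_nat h
  clear h
  suffices h : ((σ * swap a b) ^ i) x = (σ ^ i) x by
    exact ⟨(i : ℤ), by rw [zpow_natCast, h]⟩
  induction i with
  | zero => simp
  | succ n ih =>
      rw [pow_succ', pow_succ', Perm.mul_apply, Perm.mul_apply, ih, Perm.mul_apply]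
      have h1 : (σ ^ n) x ≠ a := fun h => hxa ⟨(n : ℤ), by rw [zpow_natCast, h]⟩
      have h2 : (σ ^ n) x ≠ b := fun h => hxb ⟨(n : ℤ), by rw [zpow_natCast, h]⟩
      rw [swap_apply_of_ne_of_ne h1 h2]



/-- number of cycles as number of `SameCycle`-classes -/
noncomputable def cc (σ : Perm (Fin q)) : ℕ :=
  Nat.card (Quotient (SameCycle.setoid σ))

lemma cycleCount_eq_cc (σ : Perm (Fin q)) :
    σ.cycleType.card + (Finset.univ.filter fun x => σ x = x).card = cc σ := by
  classical
  -- map from the quotient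
  have hwd : ∀ x y : Fin q, σ.SameCycle x y →
      (if h : σ x = x then (Sum.inr ⟨x, h⟩ : σ.cycleFactorsFinset ⊕ {z : Fin q // σ z = z})
       else Sum.inl ⟨σ.cycleOf x, cycleOf_mem_cycleFactorsFinset_iff.2 (mem_support.2 h)⟩) =
      (if h : σ y = y then (Sum.inr ⟨y, h⟩ : σ.cycleFactorsFinset ⊕ {z : Fin q // σ z = z})
       else Sum.inl ⟨σ.cycleOf y, cycleOf_mem_cycleFactorsFinset_iff.2 (mem_support.2 h)⟩) := by
    intro x y hxy
    rcases eq_or_ne (σ x) x with hx | hx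
    · have hy : σ y = y := (hxy.apply_eq_self_iff).1 hx
      have : x = y := hxy.eq_of_left hx
      subst this; rfl
    · have hy : σ y ≠ y := fun h => hx ((hxy.apply_eq_self_iff).2 h)
      rw [dif_neg hx, dif_neg hy]
      exact congrArg _ (Subtype.ext (hxy.cycleOf_eq))
  let f0 : Fin q → σ.cycleFactorsFinset ⊕ {z : Fin q // σ z = z} := fun x =>
    if h : σ x = x then (Sum.inr ⟨x, h⟩ : σ.cycleFactorsFinset ⊕ {z : Fin q // σ z = z})
    else Sum.inl ⟨σ.cycleOf x, cycleOf_mem_cycleFactorsFinset_iff.2 (mem_support.2 h)⟩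
  let F : Quotient (SameCycle.setoid σ) → σ.cycleFactorsFinset ⊕ {z : Fin q // σ z = z} :=
    Quotient.lift f0 hwd
  have hbij : Function.Bijective F := by
    constructor
    · rintro ⟨x⟩ ⟨y⟩ hF
      have hF' : f0 x = f0 y := hF
      unfold f0 at hF'
      rcases eq_or_ne (σ x) x with hx | hx <;> rcases eq_or_ne (σ y) y with hy | hy
      · rw [dif_pos hx, dif_pos hy] at hF'
        obtain rfl : x = y := Subtype.ext_iff.1 (Sum.inr.inj hF')
        rfl
      · rw [dif_pos hx, dif_neg hy] at hF'; exact absurd hF' (by simp)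
      · rw [dif_neg hx, dif_pos hy] at hF'; exact absurd hF' (by simp)
      · rw [dif_neg hx, dif_neg hy] at hF'
        have hco : σ.cycleOf x = σ.cycleOf y := Subtype.ext_iff.1 (Sum.inl.inj hF')
        have hy' : y ∈ (σ.cycleOf y).support :=
          mem_support_cycleOf_iff.2 ⟨SameCycle.refl _ _, mem_support.2 hy⟩
        rw [← hco] at hy'
        have : σ.SameCycle x y := (mem_support_cycleOf_iff.1 hy').1
        exact Quotient.sound this
    · rintro (⟨c, hc⟩ | ⟨z, hz⟩)
      · have hcyc : c.IsCycle := (mem_cycleFactorsFinset_iff.1 hc).1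
        obtain ⟨x, hx1, -⟩ := hcyc
        have hxs : x ∈ c.support := mem_support.2 hx1
        have hcx : c = σ.cycleOf x := cycle_is_cycleOf hxs hc
        have hxσ : σ x ≠ x := by
          have := (mem_cycleFactorsFinset_iff.1 hc).2 x hxs
          rw [← this]; exact hx1
        refine ⟨⟦x⟧, ?_⟩
        show f0 x = _
        unfold f0
        rw [dif_neg hxσ]
        exact congrArg _ (Subtype.ext hcx.symm)
      · refine ⟨⟦z⟧, ?_⟩
        show f0 z = _
        unfold f0
        rw [dif_pos hz]
  have := Nat.card_congr (Equiv.ofBijective F hbij)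
  rw [cc, this, Nat.card_sum]
  congr 1
  · rw [Nat.card_eq_fintype_card, Fintype.card_coe, cycleType_def, Multiset.card_map]
    rfl
  · rw [Nat.card_eq_fintype_card, Fintype.card_subtype]



def Rrel (σ : Perm (Fin q)) (a b x y : Fin q) : Prop :=
  σ.SameCycle x y ∨ (σ.SameCycle x a ∧ σ.SameCycle y b) ∨ (σ.SameCycle x b ∧ σ.SameCycle y a)

lemma Rrel_refl (σ : Perm (Fin q)) (a b x : Fin q) : Rrel σ a b x x := Or.inl (SameCycle.refl _ _)

lemma Rrel_symm {σ : Perm (Fin q)} {a b x y : Fin q} (h : Rrel σ a b x y) : Rrel σ a b y x := by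
  rcases h with h | ⟨h1, h2⟩ | ⟨h1, h2⟩
  · exact Or.inl h.symm
  · exact Or.inr (Or.inr ⟨h2, h1⟩)
  · exact Or.inr (Or.inl ⟨h2, h1⟩)

lemma Rrel_trans {σ : Perm (Fin q)} {a b x y z : Fin q}
    (h : Rrel σ a b x y) (h' : Rrel σ a b y z) : Rrel σ a b x z := by
  rcases h with h | ⟨h1, h2⟩ | ⟨h1, h2⟩ <;> rcases h' with h' | ⟨h1', h2'⟩ | ⟨h1', h2'⟩
  · exact Or.inl (h.trans h')
  · exact Or.inr (Or.inl ⟨h.trans h1', h2'⟩)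
  · exact Or.inr (Or.inr ⟨h.trans h1', h2'⟩)
  · exact Or.inr (Or.inl ⟨h1, h'.symm.trans h2⟩)
  · exact Or.inl (h1.trans ((h1'.symm.trans h2).trans h2'.symm))
  · exact Or.inl (h1.trans h2'.symm)
  · exact Or.inr (Or.inr ⟨h1, h'.symm.trans h2⟩)
  · exact Or.inl (h1.trans h2'.symm)
  · exact Or.inl (h1.trans (((h2.symm.trans h1').symm).trans h2'.symm))

def Rsetoid (σ : Perm (Fin q)) (a b : Fin q) : Setoid (Fin q) where
  r := Rrel σ a b
  iseqv := ⟨Rrel_refl σ a b, Rrel_symm, Rrel_trans⟩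

lemma Rrel_ab (σ : Perm (Fin q)) (a b : Fin q) : Rrel σ a b a b :=
  Or.inr (Or.inl ⟨SameCycle.refl _ _, SameCycle.refl _ _⟩)

/-- `SameCycle σ` implies `Rrel σ a b`. -/
lemma sameCycle_le_Rrel {σ : Perm (Fin q)} {a b x y : Fin q} (h : σ.SameCycle x y) :
    Rrel σ a b x y := Or.inl h



/-- step relation: `Rrel` of `σ * swap a b` is implied by `SameCycle σ`, and vice versa. -/
lemma sameCycle_mul_swap_le_Rrel {σ : Perm (Fin q)} {a b x y : Fin q}
    (h : (σ * swap a b).SameCycle x y) : Rrel σ a b x y := by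
  refine iter_rel (Rrel_refl σ a b) Rrel_trans (fun z => ?_) h
  have happ : (σ * swap a b) z = σ (swap a b z) := Perm.mul_apply _ _ _
  have hstep : ∀ w : Fin q, Rrel σ a b w (σ w) := fun w => Or.inl ⟨1, by simp⟩
  rcases eq_or_ne z a with hza | hza
  · rw [happ, hza, swap_apply_left]
    exact Rrel_trans (Rrel_ab σ a b) (hstep b)
  rcases eq_or_ne z b with hzb | hzb
  · rw [happ, hzb, swap_apply_right]
    exact Rrel_trans (Rrel_symm (Rrel_ab σ a b)) (hstep a)
  · rw [happ, swap_apply_of_ne_of_ne hza hzb]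
    exact hstep z

lemma sameCycle_le_Rrel_mul_swap {σ : Perm (Fin q)} {a b x y : Fin q}
    (h : σ.SameCycle x y) : Rrel (σ * swap a b) a b x y := by
  have key : ∀ w : Fin q, Rrel (σ * swap a b) a b w (σ w) := by
    intro w
    have hstep : ∀ u : Fin q, Rrel (σ * swap a b) a b u ((σ * swap a b) u) :=
      fun u => Or.inl ⟨1, by simp⟩
    rcases eq_or_ne w a with hwa | hwa
    · rw [hwa]
      have : σ a = (σ * swap a b) b := by rw [Perm.mul_apply, swap_apply_right]
      rw [this]
      exact Rrel_trans (Rrel_ab _ a b) (hstep b)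
    rcases eq_or_ne w b with hwb | hwb
    · rw [hwb]
      have : σ b = (σ * swap a b) a := by rw [Perm.mul_apply, swap_apply_left]
      rw [this]
      exact Rrel_trans (Rrel_symm (Rrel_ab _ a b)) (hstep a)
    · have : σ w = (σ * swap a b) w := by
        rw [Perm.mul_apply, swap_apply_of_ne_of_ne hwa hwb]
      rw [this]
      exact hstep w
  exact iter_rel (Rrel_refl _ a b) Rrel_trans key h

/-- The join relation is the same for `σ` and `σ * swap a b`. -/
lemma Rsetoid_mul_swap (σ : Perm (Fin q)) (a b : Fin q) :
    Rsetoid (σ * swap a b) a b = Rsetoid σ a b := by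
  apply Setoid.ext
  intro x y
  constructor
  · rintro (h | ⟨h1, h2⟩ | ⟨h1, h2⟩)
    · exact sameCycle_mul_swap_le_Rrel h
    · exact Rrel_trans (sameCycle_mul_swap_le_Rrel h1)
        (Rrel_trans (Rrel_ab σ a b) (Rrel_symm (sameCycle_mul_swap_le_Rrel h2)))
    · exact Rrel_trans (sameCycle_mul_swap_le_Rrel h1)
        (Rrel_trans (Rrel_symm (Rrel_ab σ a b)) (Rrel_symm (sameCycle_mul_swap_le_Rrel h2)))
  · rintro (h | ⟨h1, h2⟩ | ⟨h1, h2⟩)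
    · exact sameCycle_le_Rrel_mul_swap h
    · exact Rrel_trans (sameCycle_le_Rrel_mul_swap h1)
        (Rrel_trans (Rrel_ab _ a b) (Rrel_symm (sameCycle_le_Rrel_mul_swap h2)))
    · exact Rrel_trans (sameCycle_le_Rrel_mul_swap h1)
        (Rrel_trans (Rrel_symm (Rrel_ab _ a b)) (Rrel_symm (sameCycle_le_Rrel_mul_swap h2)))

/-- If `a, b` are in the same cycle, `Rrel = SameCycle`. -/
lemma Rsetoid_eq_of_sameCycle {σ : Perm (Fin q)} {a b : Fin q} (hab : σ.SameCycle a b) :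
    Rsetoid σ a b = SameCycle.setoid σ := by
  apply Setoid.ext
  intro x y
  constructor
  · rintro (h | ⟨h1, h2⟩ | ⟨h1, h2⟩)
    · exact h
    · exact h1.trans (hab.trans h2.symm)
    · exact h1.trans (hab.symm.trans h2.symm)
  · exact fun h => Or.inl h

/-- If `a, b` are not in the same cycle, the `R`-quotient has one fewer class. -/
lemma card_Rsetoid_of_not_sameCycle {σ : Perm (Fin q)} {a b : Fin q}
    (hab : ¬σ.SameCycle a b) :
    cc σ = Nat.card (Quotient (Rsetoid σ a b)) + 1 := by
  classical
  -- map to Quotient R ⊕ Unit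
  have hwd : ∀ x y : Fin q, σ.SameCycle x y →
      (if σ.SameCycle x b then (Sum.inr Unit.unit : Quotient (Rsetoid σ a b) ⊕ Unit)
       else Sum.inl (Quotient.mk _ x)) =
      (if σ.SameCycle y b then (Sum.inr Unit.unit : Quotient (Rsetoid σ a b) ⊕ Unit)
       else Sum.inl (Quotient.mk _ y)) := by
    intro x y hxy
    by_cases hx : σ.SameCycle x b
    · rw [if_pos hx, if_pos (hxy.symm.trans hx)]
    · rw [if_neg hx, if_neg (fun h => hx (hxy.trans h))]
      exact congrArg _ (Quotient.sound (Or.inl hxy))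
  let f0 : Fin q → Quotient (Rsetoid σ a b) ⊕ Unit := fun x =>
    if σ.SameCycle x b then Sum.inr Unit.unit else Sum.inl (Quotient.mk _ x)
  let F : Quotient (SameCycle.setoid σ) → Quotient (Rsetoid σ a b) ⊕ Unit :=
    Quotient.lift f0 hwd
  have hbij : Function.Bijective F := by
    constructor
    · rintro ⟨x⟩ ⟨y⟩ hF
      have hF' : f0 x = f0 y := hF
      unfold f0 at hF'
      by_cases hx : σ.SameCycle x b <;> by_cases hy : σ.SameCycle y b
      · exact Quotient.sound (hx.trans hy.symm)
      · rw [if_pos hx, if_neg hy] at hF'; exact absurd hF' (by simp)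
      · rw [if_neg hx, if_pos hy] at hF'; exact absurd hF' (by simp)
      · rw [if_neg hx, if_neg hy] at hF'
        have hR : Rrel σ a b x y := Quotient.exact (Sum.inl.inj hF')
        rcases hR with h | ⟨h1, h2⟩ | ⟨h1, h2⟩
        · exact Quotient.sound h
        · exact absurd h2 hy
        · exact absurd h1 hx
    · rintro (u | u)
      · obtain ⟨x⟩ := u
        by_cases hx : σ.SameCycle x b
        · refine ⟨⟦a⟧, ?_⟩
          have ha : ¬σ.SameCycle a b := hab
          show f0 a = _
          unfold f0
          rw [if_neg ha]
          refine congrArg _ (Quotient.sound ?_)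
          exact Rrel_symm (Or.inr (Or.inr ⟨hx, SameCycle.refl _ _⟩))
        · exact ⟨⟦x⟧, by show f0 x = _; unfold f0; rw [if_neg hx]; rfl⟩
      · refine ⟨⟦b⟧, ?_⟩
        show f0 b = _
        unfold f0
        rw [if_pos (SameCycle.refl _ _)]
  have := Nat.card_congr (Equiv.ofBijective F hbij)
  rw [cc, this, Nat.card_sum, Nat.card_eq_fintype_card (α := Unit), Fintype.card_unit]

lemma cycleCount_cc (σ : Perm (Fin q)) : cycleCount σ = cc σ := cycleCount_eq_cc σ

lemma support_card_le (σ : Perm (Fin q)) : σ.cycleType.sum ≤ q := by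
  rw [sum_cycleType]
  simpa using Finset.card_le_univ σ.support

lemma fix_card (σ : Perm (Fin q)) :
    (Finset.univ.filter fun x => σ x = x).card = q - σ.cycleType.sum := by
  rw [sum_cycleType]
  have h := Finset.card_filter_add_card_filter_not
    (s := (Finset.univ : Finset (Fin q))) (p := fun x => σ x = x)
  have hs : σ.support = Finset.univ.filter fun x => ¬(σ x = x) := by
    ext x; simp [mem_support]
  rw [hs]
  have hq : (Finset.univ : Finset (Fin q)).card = q := by simp
  omega

lemma cycleCount_ne_mul_swap {σ : Perm (Fin q)} {a b : Fin q} (hab : a ≠ b) :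
    cycleCount (σ * swap a b) ≠ cycleCount σ := by
  intro hEq
  have hsign : sign (σ * swap a b) = sign σ * (-1) := by
    rw [Equiv.Perm.sign_mul, sign_swap hab]
  rw [sign_of_cycleType, sign_of_cycleType] at hsign
  set s := σ.cycleType.sum
  set c := Multiset.card σ.cycleType
  set s' := (σ * swap a b).cycleType.sum
  set c' := Multiset.card (σ * swap a b).cycleType
  have hpar : (s + c) % 2 ≠ (s' + c') % 2 := by
    rcases Nat.even_or_odd (s + c) with he | ho
    · have h5 : (-1 : ℤˣ) ^ (s' + c') = -1 := by rw [hsign, he.neg_one_pow, one_mul]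
      have h6 : ¬Even (s' + c') := by
        intro h
        rw [Even.neg_one_pow (α := ℤˣ) h] at h5
        exact absurd h5 (by decide)
      rw [Nat.even_iff] at he h6
      omega
    · have h5 : (-1 : ℤˣ) ^ (s' + c') = 1 := by
        rw [hsign, ho.neg_one_pow]; decide
      have h6 : Even (s' + c') := by
        rwa [neg_one_pow_eq_one_iff_even (by decide : (-1 : ℤˣ) ≠ 1)] at h5
      rw [Nat.odd_iff] at ho
      rw [Nat.even_iff] at h6
      omega
  have h1 : c' + (q - s') = c + (q - s) := by
    have := hEq
    rw [cycleCount, cycleCount, fix_card, fix_card] at this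
    exact this
  have h2 := support_card_le σ
  have h3 := support_card_le (σ * swap a b)
  omega

lemma key_sc {σ : Perm (Fin q)} {a b : Fin q} (hab : a ≠ b) (h : σ.SameCycle a b) :
    cycleCount (σ * swap a b) = cycleCount σ + 1 ∧ ¬(σ * swap a b).SameCycle a b := by
  have hne := cycleCount_ne_mul_swap (σ := σ) hab
  have hσ : cc σ = Nat.card (Quotient (Rsetoid σ a b)) := by
    rw [Rsetoid_eq_of_sameCycle h]; rfl
  by_cases hs : (σ * swap a b).SameCycle a b
  · exfalso
    have hστ : cc (σ * swap a b) = Nat.card (Quotient (Rsetoid (σ * swap a b) a b)) := by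
      rw [Rsetoid_eq_of_sameCycle hs]; rfl
    rw [Rsetoid_mul_swap] at hστ
    exact hne (by rw [cycleCount_cc, cycleCount_cc, hσ, hστ])
  · have hστ := card_Rsetoid_of_not_sameCycle hs
    rw [Rsetoid_mul_swap] at hστ
    refine ⟨?_, hs⟩
    rw [cycleCount_cc, cycleCount_cc, hστ, hσ]

lemma key_nsc {σ : Perm (Fin q)} {a b : Fin q} (hab : a ≠ b) (h : ¬σ.SameCycle a b) :
    cycleCount σ = cycleCount (σ * swap a b) + 1 ∧ (σ * swap a b).SameCycle a b := by
  have hne := cycleCount_ne_mul_swap (σ := σ) hab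
  have hσ := card_Rsetoid_of_not_sameCycle h
  by_cases hs : (σ * swap a b).SameCycle a b
  · have hστ : cc (σ * swap a b) = Nat.card (Quotient (Rsetoid (σ * swap a b) a b)) := by
      rw [Rsetoid_eq_of_sameCycle hs]; rfl
    rw [Rsetoid_mul_swap] at hστ
    exact ⟨by rw [cycleCount_cc, cycleCount_cc, hσ, hστ], hs⟩
  · exfalso
    have hστ := card_Rsetoid_of_not_sameCycle hs
    rw [Rsetoid_mul_swap] at hστ
    exact hne (by rw [cycleCount_cc, cycleCount_cc, hσ, hστ])

/-- characterization: `+1` iff same cycle -/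
lemma sameCycle_iff_cycleCount {σ : Perm (Fin q)} {a b : Fin q} (hab : a ≠ b) :
    σ.SameCycle a b ↔ cycleCount (σ * swap a b) = cycleCount σ + 1 := by
  constructor
  · exact fun h => (key_sc hab h).1
  · intro h
    by_contra hn
    have := (key_nsc hab hn).1
    omega


/-- first hitting time ≥ 1 from `a` to `z` along `σ`. -/
noncomputable def hitT (σ : Perm (Fin q)) (a z : Fin q) : ℕ :=
  sInf {n : ℕ | 1 ≤ n ∧ (σ ^ n) a = z}

lemma hit_nonempty {σ : Perm (Fin q)} {a z : Fin q} (h : σ.SameCycle a z) :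
    {n : ℕ | 1 ≤ n ∧ (σ ^ n) a = z}.Nonempty := by
  obtain ⟨i, _, hi⟩ := h.exists_pow_eq'
  rcases Nat.eq_zero_or_pos i with rfl | hpos
  · simp only [pow_zero] at hi
    refine ⟨orderOf σ, orderOf_pos σ, ?_⟩
    rw [pow_orderOf_eq_one]
    exact hi
  · exact ⟨i, hpos, hi⟩

lemma hit_mem {σ : Perm (Fin q)} {a z : Fin q} (h : σ.SameCycle a z) :
    1 ≤ hitT σ a z ∧ (σ ^ (hitT σ a z)) a = z :=
  Nat.sInf_mem (hit_nonempty h)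

lemma hit_le {σ : Perm (Fin q)} {a z : Fin q} {n : ℕ} (hn : 1 ≤ n) (h : (σ ^ n) a = z) :
    hitT σ a z ≤ n :=
  Nat.sInf_le ⟨hn, h⟩

lemma hit_inj {σ : Perm (Fin q)} {a u v : Fin q} (hu : σ.SameCycle a u) (hv : σ.SameCycle a v)
    (h : hitT σ a u = hitT σ a v) : u = v := by
  have h1 := (hit_mem hu).2
  have h2 := (hit_mem hv).2
  rw [← h1, ← h2, h]

lemma hit_lt {σ : Perm (Fin q)} {a z : Fin q} (hz : σ.SameCycle a z) (hza : z ≠ a) :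
    hitT σ a z < hitT σ a a := by
  set L := hitT σ a a with hL
  have hLmem := hit_mem (SameCycle.refl σ a)
  by_contra hge
  push_neg at hge
  set m := hitT σ a z with hm
  have hmem := hit_mem hz
  -- consider m - L
  have hpow : (σ ^ (m - L)) a = z := by
    have hml : m - L + L = m := by omega
    have : (σ ^ (m - L)) ((σ ^ L) a) = (σ ^ m) a := by
      rw [← Perm.mul_apply, ← pow_add, hml]
    rw [hLmem.2] at this
    rw [this, hmem.2]
  rcases Nat.eq_zero_or_pos (m - L) with h0 | hpos
  · simp only [h0, pow_zero, Perm.coe_one, id_eq] at hpow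
    exact hza hpow.symm
  · have := hit_le hpos hpow
    omega

/-- uniqueness of the hitting time among exponents in `[1, L)` -/
lemma hit_unique {σ : Perm (Fin q)} {a z : Fin q} {m : ℕ} (hm1 : 1 ≤ m)
    (hmL : m < hitT σ a a) (h : (σ ^ m) a = z) : m = hitT σ a z := by
  have hz : σ.SameCycle a z := ⟨(m : ℤ), by rw [zpow_natCast, h]⟩
  have hle : hitT σ a z ≤ m := hit_le hm1 h
  rcases eq_or_lt_of_le hle with heq | hlt
  · omega
  · exfalso
    set K := hitT σ a z with hK
    set L := hitT σ a a with hL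
    have hKmem := hit_mem hz
    have hLmem := hit_mem (SameCycle.refl σ a)
    -- σ^(L-m+K) a = a with 1 ≤ L-m+K < L
    have hpow : (σ ^ (L - m + K)) a = a := by
      have h1 : (σ ^ (L - m)) ((σ ^ m) a) = a := by
        rw [← Perm.mul_apply, ← pow_add]
        have : L - m + m = L := by omega
        rw [this, hLmem.2]
      have h2 : (σ ^ (L - m)) ((σ ^ K) a) = a := by
        rw [hKmem.2, ← h]; exact h1
      rw [pow_add, Perm.mul_apply]
      exact h2
    have hlt2 : hitT σ a a ≤ L - m + K := hit_le (by omega) hpow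
    have hmL' : m < L := hmL
    omega

lemma hit_step {σ : Perm (Fin q)} {a z : Fin q} (hz : σ.SameCycle a z) (hza : z ≠ a)
    (hσz : σ z ≠ a) : hitT σ a (σ z) = hitT σ a z + 1 := by
  have hmem := hit_mem hz
  have hL := hit_lt hz hza
  have hpow : (σ ^ (hitT σ a z + 1)) a = σ z := by
    rw [pow_succ', Perm.mul_apply, hmem.2]
  -- need hitT σ a z + 1 < L or = L? if = L then σ z = ... a? 
  rcases eq_or_lt_of_le (Nat.succ_le_of_lt hL) with heq | hlt
  · exfalso
    have hLmem := hit_mem (SameCycle.refl σ a)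
    have heq' : hitT σ a z + 1 = hitT σ a a := heq
    rw [heq'] at hpow
    rw [hLmem.2] at hpow
    exact hσz hpow.symm
  · exact (hit_unique (by omega) hlt hpow).symm

lemma hit_one {σ : Perm (Fin q)} {a : Fin q} : hitT σ a (σ a) = 1 := by
  have h1 : hitT σ a (σ a) ≤ 1 := hit_le le_rfl (pow_one σ ▸ rfl)
  have h2 : 1 ≤ hitT σ a (σ a) := (hit_mem ⟨1, by simp⟩).1
  omega


/-- piece containing `b` after splitting at `(a b)`: `(σ(a b))^k b = σ^k a` for `1 ≤ k ≤ hit b`. -/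
lemma piece_b {σ : Perm (Fin q)} {a b x : Fin q} (hab : b ≠ a) (hb : σ.SameCycle a b)
    (hx : σ.SameCycle a x) (hxa : x ≠ a) (hxb : hitT σ a x ≤ hitT σ a b) :
    (σ * swap a b).SameCycle b x := by
  have hKL := hit_lt hb hab
  set K := hitT σ a b with hK
  set L := hitT σ a a with hL
  have hclaim : ∀ k, 1 ≤ k → k ≤ K → ((σ * swap a b) ^ k) b = (σ ^ k) a := by
    intro k hk1 hkK
    induction k with
    | zero => omega
    | succ n ih =>
        rcases Nat.eq_zero_or_pos n with rfl | hn
        · simp [Perm.mul_apply]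
        · have ihn := ih hn (by omega)
          have hna : (σ ^ n) a ≠ a := by
            intro h
            have := hit_le hn h
            omega
          have hnb : (σ ^ n) a ≠ b := by
            intro h
            have := hit_le hn h
            omega
          have e1 : ((σ * swap a b) ^ (n + 1)) b
              = (σ * swap a b) (((σ * swap a b) ^ n) b) := by
            rw [pow_succ', Perm.mul_apply]
          have e2 : (σ ^ (n + 1)) a = σ ((σ ^ n) a) := by
            rw [pow_succ', Perm.mul_apply]
          rw [e1, e2, ihn, Perm.mul_apply, swap_apply_of_ne_of_ne hna hnb]
  have hxmem := hit_mem hx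
  have hclaimx := hclaim _ hxmem.1 hxb
  rw [hxmem.2] at hclaimx
  exact ⟨(hitT σ a x : ℤ), by rw [zpow_natCast, hclaimx]⟩

/-- piece containing `a`: `(σ(a b))^(m - K) a = σ^m a` for `K < m < L`. -/
lemma piece_a {σ : Perm (Fin q)} {a b x : Fin q} (hab : b ≠ a) (hb : σ.SameCycle a b)
    (hx : σ.SameCycle a x) (hxa : x ≠ a) (hbx : hitT σ a b < hitT σ a x) :
    (σ * swap a b).SameCycle a x := by
  have hKL := hit_lt hb hab
  have hxL := hit_lt hx hxa
  set K := hitT σ a b with hK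
  set L := hitT σ a a with hL
  have hbmem := hit_mem hb
  have hclaim : ∀ m, K < m → m < L → ((σ * swap a b) ^ (m - K)) a = (σ ^ m) a := by
    intro m hKm hmL
    induction m with
    | zero => omega
    | succ n ih =>
        rcases Nat.lt_or_ge K n with hKn | hnK
        · -- step case: n > K
          have ihn := ih hKn (by omega)
          have hstep : n + 1 - K = (n - K) + 1 := by omega
          have hna : (σ ^ n) a ≠ a := by
            intro h
            have := hit_le (by omega) h
            omega
          have hnb : (σ ^ n) a ≠ b := by
            intro h
            have := hit_unique (m := n) (by omega) (by omega) h
            omega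
          have e1 : ((σ * swap a b) ^ (n - K + 1)) a
              = (σ * swap a b) (((σ * swap a b) ^ (n - K)) a) := by
            rw [pow_succ', Perm.mul_apply]
          have e2 : (σ ^ (n + 1)) a = σ ((σ ^ n) a) := by
            rw [pow_succ', Perm.mul_apply]
          rw [hstep, e1, e2, ihn, Perm.mul_apply, swap_apply_of_ne_of_ne hna hnb]
        · -- base case: n = K
          have hnK' : n = K := by omega
          have h1 : n + 1 - K = 1 := by omega
          have e2 : (σ ^ (n + 1)) a = σ ((σ ^ n) a) := by
            rw [pow_succ', Perm.mul_apply]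
          rw [h1, pow_one, Perm.mul_apply, swap_apply_left, e2, hnK', hbmem.2]
  have hxmem := hit_mem hx
  have hclaimx := hclaim _ hbx hxL
  rw [hxmem.2] at hclaimx
  exact ⟨((hitT σ a x - K : ℕ) : ℤ), by rw [zpow_natCast, hclaimx]⟩

/-- points on opposite sides of the split are in different cycles of `σ(a b)`. -/
lemma cross_not_sameCycle {σ : Perm (Fin q)} {a b x y : Fin q} (hab : b ≠ a)
    (hb : σ.SameCycle a b) (hx : σ.SameCycle a x) (hy : σ.SameCycle a y)
    (hxa : x ≠ a) (hya : y ≠ a)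
    (hxb : hitT σ a x ≤ hitT σ a b) (hby : hitT σ a b < hitT σ a y) :
    ¬(σ * swap a b).SameCycle x y := by
  classical
  intro hSC
  have hKL := hit_lt hb hab
  have hyL := hit_lt hy hya
  set K := hitT σ a b with hK
  set L := hitT σ a a with hL
  set P : Finset (Fin q) :=
    Finset.univ.filter (fun z => σ.SameCycle a z ∧ z ≠ a ∧ hitT σ a z ≤ K) with hP
  have hmemP : ∀ z, z ∈ P ↔ σ.SameCycle a z ∧ z ≠ a ∧ hitT σ a z ≤ K := by
    intro z; simp [hP]
  have hclosed : ∀ z ∈ P, (σ * swap a b) z ∈ P := by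
    intro z hz
    obtain ⟨hz1, hz2, hz3⟩ := (hmemP z).1 hz
    have happ : (σ * swap a b) z = σ (swap a b z) := Perm.mul_apply _ _ _
    rcases eq_or_ne z b with rfl | hzb
    · rw [happ, swap_apply_right]
      have hσa : σ a ≠ a := by
        intro h
        exact (hab : z ≠ a) (hb.eq_of_left h).symm
      refine (hmemP _).2 ⟨⟨1, by simp⟩, hσa, ?_⟩
      rw [hit_one]
      exact (hit_mem hb).1
    · rw [happ, swap_apply_of_ne_of_ne hz2 hzb]
      have hzK : hitT σ a z < K := by
        rcases eq_or_lt_of_le hz3 with heq | hlt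
        · exact absurd (hit_inj hz1 hb heq) hzb
        · exact hlt
      have hσz : σ z ≠ a := by
        intro h
        have hL' : L ≤ hitT σ a z + 1 := by
          apply hit_le (by omega)
          rw [pow_succ', Perm.mul_apply, (hit_mem hz1).2, h]
        omega
      refine (hmemP _).2 ⟨hz1.trans ⟨1, by simp⟩, hσz, ?_⟩
      rw [hit_step hz1 hz2 hσz]
      omega
  obtain ⟨i, hi⟩ := sameCycle_nat hSC
  have hxP : x ∈ P := (hmemP _).2 ⟨hx, hxa, hxb⟩
  have hyP : y ∈ P := hi ▸ pow_mem_of_closed hclosed hxP i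
  have := ((hmemP y).1 hyP).2.2
  omega
/-- Order of hitting times from `a` is preserved when splitting at `(c d)`,
provided `hit c < hit d`. -/
lemma bridge {σ : Perm (Fin q)} {a c d u v : Fin q}
    (hca : c ≠ a) (hda : d ≠ a)
    (hac : σ.SameCycle a c) (had : σ.SameCycle a d)
    (hcd' : hitT σ a c < hitT σ a d)
    (hu : (σ * swap c d).SameCycle a u) (hv : (σ * swap c d).SameCycle a v)
    (hua : u ≠ a) (hva : v ≠ a) :
    hitT (σ * swap c d) a u < hitT (σ * swap c d) a v ↔ hitT σ a u < hitT σ a v := by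
  have hscd : σ.SameCycle c d := hac.symm.trans had
  set ψ := σ * swap c d with hψ
  have hSCσ : ∀ z : Fin q, ψ.SameCycle a z → σ.SameCycle a z := fun z h => split_le hscd h
  have hpdL : hitT σ a d < hitT σ a a := hit_lt had hda
  have hpc1 : 1 ≤ hitT σ a c := (hit_mem hac).1
  -- step lemma
  have hstep : ∀ k, 1 ≤ k → k < hitT ψ a a →
      ¬(hitT σ a c < hitT σ a ((ψ ^ k) a) ∧ hitT σ a ((ψ ^ k) a) ≤ hitT σ a d) →
      (hitT σ a ((ψ ^ k) a) < hitT σ a ((ψ ^ (k+1)) a) ∧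
       ¬(hitT σ a c < hitT σ a ((ψ ^ (k+1)) a) ∧
         hitT σ a ((ψ ^ (k+1)) a) ≤ hitT σ a d)) := by
    intro k hk1 hkW hInv
    have hzψ : ψ.SameCycle a ((ψ ^ k) a) := ⟨(k : ℤ), by rw [zpow_natCast]⟩
    have hzσ : σ.SameCycle a ((ψ ^ k) a) := hSCσ _ hzψ
    have hzan : (ψ ^ k) a ≠ a := by
      intro h
      have : hitT ψ a a ≤ k := hit_le hk1 h
      omega
    have hnext : (ψ ^ (k+1)) a = ψ ((ψ ^ k) a) := by rw [pow_succ', Perm.mul_apply]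
    by_cases hψza : ψ ((ψ ^ k) a) = a
    · -- wrap-around: k+1 is the return time
      have hq1 : (ψ ^ (k+1)) a = a := by rw [hnext, hψza]
      have hgk1 : hitT σ a ((ψ ^ (k+1)) a) = hitT σ a a := by rw [hq1]
      have hgkL : hitT σ a ((ψ ^ k) a) < hitT σ a a := hit_lt hzσ hzan
      rw [hgk1]
      exact ⟨hgkL, by omega⟩
    · by_cases hzc : (ψ ^ k) a = c
      · -- jump across the removed arc
        have hjump : ψ ((ψ ^ k) a) = σ d := by
          rw [hψ, Perm.mul_apply, hzc, swap_apply_left]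
        have hσd : σ d ≠ a := by rw [← hjump]; exact hψza
        have hgk1 : hitT σ a ((ψ ^ (k+1)) a) = hitT σ a d + 1 := by
          rw [hnext, hjump]
          exact hit_step had hda hσd
        have hgk : hitT σ a ((ψ ^ k) a) = hitT σ a c := by rw [hzc]
        rw [hgk1, hgk]
        omega
      · by_cases hzd : (ψ ^ k) a = d
        · exfalso
          rw [hzd] at hInv
          exact hInv ⟨hcd', le_rfl⟩
        · -- generic step
          have hid : ψ ((ψ ^ k) a) = σ ((ψ ^ k) a) := by
            rw [hψ, Perm.mul_apply, swap_apply_of_ne_of_ne hzc hzd]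
          have hσz : σ ((ψ ^ k) a) ≠ a := by rw [← hid]; exact hψza
          have hgk1 : hitT σ a ((ψ ^ (k+1)) a) = hitT σ a ((ψ ^ k) a) + 1 := by
            rw [hnext, hid]
            exact hit_step hzσ hzan hσz
          have hgc : hitT σ a ((ψ ^ k) a) ≠ hitT σ a c := by
            intro h
            exact hzc (hit_inj hzσ hac h)
          rw [hgk1]
          omega
  -- invariant by induction
  have hINV : ∀ k, 1 ≤ k → k ≤ hitT ψ a a →
      ¬(hitT σ a c < hitT σ a ((ψ ^ k) a) ∧ hitT σ a ((ψ ^ k) a) ≤ hitT σ a d) := by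
    intro k hk1
    induction k with
    | zero => omega
    | succ n ih =>
        rcases Nat.eq_zero_or_pos n with rfl | hn
        · intro _
          have hψa : (ψ ^ (0 + 1)) a = σ a := by
            rw [zero_add, pow_one, hψ, Perm.mul_apply,
              swap_apply_of_ne_of_ne (Ne.symm hca) (Ne.symm hda)]
          rw [hψa, hit_one]
          omega
        · intro hkW
          exact (hstep n hn (by omega) (ih hn (by omega))).2
  -- strict monotonicity
  have hmono : ∀ k2 k1, 1 ≤ k1 → k1 < k2 → k2 ≤ hitT ψ a a →
      hitT σ a ((ψ ^ k1) a) < hitT σ a ((ψ ^ k2) a) := by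
    intro k2
    induction k2 with
    | zero => omega
    | succ n ih =>
        intro k1 h1 hlt hle
        have hn1 : 1 ≤ n := by omega
        have hstepn := hstep n hn1 (by omega) (hINV n hn1 (by omega))
        rcases eq_or_lt_of_le (Nat.lt_succ_iff.1 hlt) with heq | hlt'
        · rw [heq]
          exact hstepn.1
        · exact lt_trans (ih k1 h1 hlt' (by omega)) hstepn.1
  -- conclude
  have hu' : hitT ψ a u < hitT ψ a a := hit_lt hu hua
  have hv' : hitT ψ a v < hitT ψ a a := hit_lt hv hva
  have hgu : hitT σ a u = hitT σ a ((ψ ^ (hitT ψ a u)) a) := by rw [(hit_mem hu).2]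
  have hgv : hitT σ a v = hitT σ a ((ψ ^ (hitT ψ a v)) a) := by rw [(hit_mem hv).2]
  constructor
  · intro h
    rw [hgu, hgv]
    exact hmono _ _ (hit_mem hu).1 h (le_of_lt hv')
  · intro h
    by_contra hge
    push_neg at hge
    rcases eq_or_lt_of_le hge with heq | hlt
    · have : v = u := hit_inj hv hu heq
      rw [this] at h
      omega
    · have := hmono _ _ (hit_mem hv).1 hlt (le_of_lt hu')
      rw [← hgu, ← hgv] at this
      omega

/-- core contradiction: in `σ`, split at `(a b)` keeps `x,y` together, but in
`ψ = σ(c d)` the same split separates them; impossible since hitting orders agree. -/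
lemma inter_core {σ : Perm (Fin q)} {a b c d x y : Fin q}
    (hba : b ≠ a) (hxa : x ≠ a) (hya : y ≠ a) (hxb : x ≠ b) (hyb : y ≠ b)
    (hca : c ≠ a) (hda : d ≠ a)
    (hSab : σ.SameCycle a b) (hSac : σ.SameCycle a c) (hSad : σ.SameCycle a d)
    (hSax : σ.SameCycle a x) (hSay : σ.SameCycle a y)
    (hPab : (σ * swap c d).SameCycle a b)
    (hPax : (σ * swap c d).SameCycle a x)
    (hPay : (σ * swap c d).SameCycle a y)
    (hcd' : hitT σ a c < hitT σ a d)
    (H4 : ¬(σ * swap c d * swap a b).SameCycle x y)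
    (H5 : (σ * swap a b).SameCycle x y) : False := by
  set ψ := σ * swap c d with hψ
  -- hitting times in σ
  have hpxb : hitT σ a x ≠ hitT σ a b := fun h => hxb (hit_inj hSax hSab h)
  have hpyb : hitT σ a y ≠ hitT σ a b := fun h => hyb (hit_inj hSay hSab h)
  -- σ-sides of x and y agree (else the split at (a b) would separate them)
  have hσsides : hitT σ a x < hitT σ a b ↔ hitT σ a y < hitT σ a b := by
    constructor
    · intro hx
      by_contra hy
      push_neg at hy
      exact cross_not_sameCycle hba hSab hSax hSay hxa hya (le_of_lt hx)
        (lt_of_le_of_ne hy (Ne.symm hpyb)) H5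
    · intro hy
      by_contra hx
      push_neg at hx
      exact cross_not_sameCycle hba hSab hSay hSax hya hxa (le_of_lt hy)
        (lt_of_le_of_ne hx (Ne.symm hpxb)) H5.symm
  -- ψ-sides of x and y must differ (else they'd stay together after split at (a b))
  have hp'xb : hitT ψ a x ≠ hitT ψ a b := fun h => hxb (hit_inj hPax hPab h)
  have hp'yb : hitT ψ a y ≠ hitT ψ a b := fun h => hyb (hit_inj hPay hPab h)
  have hψsides : ¬(hitT ψ a x < hitT ψ a b ↔ hitT ψ a y < hitT ψ a b) := by
    intro hiff
    rcases lt_or_gt_of_ne hp'xb with hx | hx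
    · have hy := hiff.1 hx
      have h1 : (ψ * swap a b).SameCycle b x :=
        piece_b hba hPab hPax hxa (le_of_lt hx)
      have h2 : (ψ * swap a b).SameCycle b y :=
        piece_b hba hPab hPay hya (le_of_lt hy)
      exact H4 (h1.symm.trans h2)
    · have hy : hitT ψ a b < hitT ψ a y := by
        by_contra hc
        push_neg at hc
        exact hx.not_gt (hiff.2 (lt_of_le_of_ne hc hp'yb))
      have h1 : (ψ * swap a b).SameCycle a x := piece_a hba hPab hPax hxa hx
      have h2 : (ψ * swap a b).SameCycle a y := piece_a hba hPab hPay hya hy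
      exact H4 (h1.symm.trans h2)
  -- bridge transfers the sides
  have hbx := bridge hca hda hSac hSad hcd' hPax hPab hxa hba
  have hby := bridge hca hda hSac hSad hcd' hPay hPab hya hba
  rw [hbx, hby] at hψsides
  exact hψsides hσsides

lemma swap_disjoint {a b c d : Fin q} (hac : a ≠ c) (had : a ≠ d) (hbc : b ≠ c)
    (hbd : b ≠ d) : (swap a b).Disjoint (swap c d) := by
  intro z
  by_cases hz : z ≠ a ∧ z ≠ b
  · exact Or.inl (swap_apply_of_ne_of_ne hz.1 hz.2)
  · push_neg at hz
    right
    by_cases hza : z = a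
    · rw [hza]; exact swap_apply_of_ne_of_ne hac had
    · rw [hz hza]; exact swap_apply_of_ne_of_ne hbc hbd

lemma swap_mul_comm {a b c d : Fin q} (hac : a ≠ c) (had : a ≠ d) (hbc : b ≠ c)
    (hbd : b ≠ d) : swap a b * swap c d = swap c d * swap a b :=
  (swap_disjoint hac had hbc hbd).commute.eq

/-- the interleaving contradiction -/
lemma inter {σ : Perm (Fin q)} {c d a b x y : Fin q}
    (hab : a ≠ b) (hcd : c ≠ d) (hxy : x ≠ y)
    (hac : a ≠ c) (had : a ≠ d) (hbc : b ≠ c) (hbd : b ≠ d)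
    (hxa : x ≠ a) (hxb : x ≠ b) (hya : y ≠ a) (hyb : y ≠ b)
    (hxc : x ≠ c) (hxd : x ≠ d) (hyc : y ≠ c) (hyd : y ≠ d)
    (H1 : σ.SameCycle c d)
    (H2 : (σ * swap c d).SameCycle a b)
    (H3 : (σ * swap c d).SameCycle x y)
    (H4 : ¬(σ * swap c d * swap a b).SameCycle x y)
    (H5 : (σ * swap a b).SameCycle x y) : False := by
  have hSab : σ.SameCycle a b := split_le H1 H2
  have hSxy : σ.SameCycle x y := split_le H1 H3
  -- counts
  have c1 : cycleCount (σ * swap c d) = cycleCount σ + 1 := (key_sc hcd H1).1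
  have c2 : cycleCount (σ * swap c d * swap a b) = cycleCount σ + 2 := by
    rw [(key_sc hab H2).1, c1]
  have c3 : cycleCount (σ * swap a b) = cycleCount σ + 1 := (key_sc hab hSab).1
  have hperm1 : σ * swap a b * swap c d = σ * swap c d * swap a b := by
    rw [mul_assoc, swap_mul_comm hac had hbc hbd, ← mul_assoc]
  have c4 : cycleCount (σ * swap a b * swap c d) = cycleCount σ + 2 := by
    rw [hperm1]; exact c2
  have hSCαcd : (σ * swap a b).SameCycle c d :=
    (sameCycle_iff_cycleCount hcd).2 (by rw [c4, c3])
  have c5 : cycleCount (σ * swap a b * swap x y) = cycleCount σ + 2 := by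
    rw [(key_sc hxy H5).1, c3]
  have c6 : cycleCount (σ * swap c d * swap a b * swap x y) = cycleCount σ + 1 := by
    have := (key_nsc hxy H4).1
    omega
  have hn7 : ¬(σ * swap a b * swap x y).SameCycle c d := by
    intro h
    have h8 := (key_sc hcd h).1
    have hperm2 : σ * swap a b * swap x y * swap c d
        = σ * swap c d * swap a b * swap x y := by
      rw [mul_assoc (σ * swap a b), swap_mul_comm hxc hxd hyc hyd, ← mul_assoc, hperm1]
    rw [hperm2, c6, c5] at h8
    omega
  -- cohabitation at σ(c d)
  have hPax : (σ * swap c d).SameCycle a x := by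
    by_cases h1 : (σ * swap c d).SameCycle x a
    · exact h1.symm
    by_cases h2 : (σ * swap c d).SameCycle x b
    · exact H2.trans h2.symm
    · exact absurd (loc_sameCycle h1 h2 H3) H4
  have hPay : (σ * swap c d).SameCycle a y := hPax.trans H3
  -- cohabitation of c with x at σ(a b)
  have hQxc : (σ * swap a b).SameCycle x c := by
    by_cases h1 : (σ * swap a b).SameCycle c x
    · exact h1.symm
    by_cases h2 : (σ * swap a b).SameCycle c y
    · exact (h2.trans H5.symm).symm
    · exact absurd (loc_sameCycle h1 h2 hSCαcd) hn7
  -- all six in the σ-cycle of a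
  have hSax : σ.SameCycle a x := split_le H1 hPax
  have hSay : σ.SameCycle a y := split_le H1 hPay
  have hSxc : σ.SameCycle x c := split_le hSab hQxc
  have hSac : σ.SameCycle a c := hSax.trans hSxc
  have hSad : σ.SameCycle a d := hSac.trans H1
  -- wlog on hitting times of c, d
  have hne : hitT σ a c ≠ hitT σ a d := fun h => hcd (hit_inj hSac hSad h)
  rcases lt_or_gt_of_ne hne with hlt | hgt
  · exact inter_core hab.symm hxa hya hxb hyb hac.symm had.symm
      hSab hSac hSad hSax hSay H2 hPax hPay hlt H4 H5
  · have hswap : swap c d = swap d c := Equiv.swap_comm c d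
    rw [hswap] at H2 hPax hPay H4
    exact inter_core hab.symm hxa hya hxb hyb had.symm hac.symm
      hSab hSad hSac hSax hSay H2 hPax hPay hgt H4 H5

lemma disj_ne {a b c d : Fin q} (h : (swap a b).Disjoint (swap c d))
    (hab : a ≠ b) (hcd : c ≠ d) : a ≠ c ∧ a ≠ d ∧ b ≠ c ∧ b ≠ d := by
  have ha := h a
  rw [swap_apply_left] at ha
  have hA : swap c d a = a := by
    rcases ha with h' | h'
    · exact absurd h'.symm hab
    · exact h'
  have hb := h b
  rw [swap_apply_right] at hb
  have hB : swap c d b = b := by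
    rcases hb with h' | h'
    · exact absurd h' hab
    · exact h'
  refine ⟨?_, ?_, ?_, ?_⟩
  · rintro rfl; rw [swap_apply_left] at hA; exact hcd hA.symm
  · rintro rfl; rw [swap_apply_right] at hA; exact hcd hA
  · rintro rfl; rw [swap_apply_left] at hB; exact hcd hB.symm
  · rintro rfl; rw [swap_apply_right] at hB; exact hcd hB

theorem main (q : ℕ) (ς : Equiv.Perm (Fin q))
    (τ : Fin 3 → Equiv.Perm (Fin q))
    (hswap : ∀ i, (τ i).IsSwap)
    (hdisj : ∀ i j, i ≠ j → (τ i).Disjoint (τ j))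
    (h1 : cycleCount (ς * τ 0) = cycleCount ς + 1)
    (h2 : cycleCount (ς * τ 0 * τ 1) = cycleCount ς + 2)
    (h3 : cycleCount (ς * τ 0 * τ 1 * τ 2) = cycleCount ς + 1) :
    ∃ π : Equiv.Perm (Fin 3),
      cycleCount (ς * τ (π 0)) = cycleCount ς + 1 ∧
      cycleCount (ς * τ (π 0) * τ (π 1)) = cycleCount ς ∧
      cycleCount (ς * τ (π 0) * τ (π 1) * τ (π 2)) = cycleCount ς + 1 := by
  classical
  obtain ⟨a0, b0, hab0, ht0⟩ := hswap 0
  obtain ⟨a1, b1, hab1, ht1⟩ := hswap 1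
  obtain ⟨a2, b2, hab2, ht2⟩ := hswap 2
  have hd01 := hdisj 0 1 (by decide)
  rw [ht0, ht1] at hd01
  have hd02 := hdisj 0 2 (by decide)
  rw [ht0, ht2] at hd02
  have hd12 := hdisj 1 2 (by decide)
  rw [ht1, ht2] at hd12
  obtain ⟨h01a, h01b, h01c, h01d⟩ := disj_ne hd01 hab0 hab1
  obtain ⟨h02a, h02b, h02c, h02d⟩ := disj_ne hd02 hab0 hab2
  obtain ⟨h12a, h12b, h12c, h12d⟩ := disj_ne hd12 hab1 hab2
  rw [ht0] at h1
  rw [ht0, ht1] at h2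
  rw [ht0, ht1, ht2] at h3
  have c01 : swap a1 b1 * swap a0 b0 = swap a0 b0 * swap a1 b1 :=
    swap_mul_comm h01a.symm h01c.symm h01b.symm h01d.symm
  have c20 : swap a2 b2 * swap a0 b0 = swap a0 b0 * swap a2 b2 :=
    swap_mul_comm h02a.symm h02c.symm h02b.symm h02d.symm
  have c21 : swap a2 b2 * swap a1 b1 = swap a1 b1 * swap a2 b2 :=
    swap_mul_comm h12a.symm h12c.symm h12b.symm h12d.symm
  have SC1 : ς.SameCycle a0 b0 := (sameCycle_iff_cycleCount hab0).2 h1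
  have SC2 : (ς * swap a0 b0).SameCycle a1 b1 :=
    (sameCycle_iff_cycleCount hab1).2 (by rw [h2, h1])
  have NSC3 : ¬(ς * swap a0 b0 * swap a1 b1).SameCycle a2 b2 := by
    intro h
    have := (key_sc hab2 h).1
    rw [h3, h2] at this
    omega
  by_cases hA : (ς * swap a0 b0).SameCycle a2 b2
  · -- interleaving case: order τ1, τ2, τ0
    have SCb1 : ς.SameCycle a1 b1 := split_le SC1 SC2
    have B2 : ¬(ς * swap a1 b1).SameCycle a2 b2 := fun hSC =>
      inter hab1 hab0 hab2 h01a.symm h01c.symm h01b.symm h01d.symm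
        h12a.symm h12c.symm h12b.symm h12d.symm h02a.symm h02c.symm h02b.symm h02d.symm
        SC1 SC2 hA NSC3 hSC
    have k1 : cycleCount (ς * swap a1 b1) = cycleCount ς + 1 := (key_sc hab1 SCb1).1
    have k2 : cycleCount (ς * swap a1 b1 * swap a2 b2) = cycleCount ς := by
      have := (key_nsc hab2 B2).1
      omega
    have k3 : cycleCount (ς * swap a1 b1 * swap a2 b2 * swap a0 b0)
        = cycleCount ς + 1 := by
      have e : ς * swap a1 b1 * swap a2 b2 * swap a0 b0
          = ς * swap a0 b0 * swap a1 b1 * swap a2 b2 := by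
        rw [mul_assoc (ς * swap a1 b1), c20, ← mul_assoc, mul_assoc ς, c01, ← mul_assoc]
      rw [e]
      exact h3
    refine ⟨Equiv.swap 0 1 * Equiv.swap 1 2, ?_, ?_, ?_⟩
    · have e0 : ((Equiv.swap 0 1 * Equiv.swap 1 2 : Perm (Fin 3))) 0 = 1 := by decide
      rw [e0, ht1]
      exact k1
    · have e0 : ((Equiv.swap 0 1 * Equiv.swap 1 2 : Perm (Fin 3))) 0 = 1 := by decide
      have e1 : ((Equiv.swap 0 1 * Equiv.swap 1 2 : Perm (Fin 3))) 1 = 2 := by decide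
      rw [e0, e1, ht1, ht2]
      exact k2
    · have e0 : ((Equiv.swap 0 1 * Equiv.swap 1 2 : Perm (Fin 3))) 0 = 1 := by decide
      have e1 : ((Equiv.swap 0 1 * Equiv.swap 1 2 : Perm (Fin 3))) 1 = 2 := by decide
      have e2 : ((Equiv.swap 0 1 * Equiv.swap 1 2 : Perm (Fin 3))) 2 = 0 := by decide
      rw [e0, e1, e2, ht0, ht1, ht2]
      exact k3
  · -- simple case: order τ0, τ2, τ1
    have k2 : cycleCount (ς * swap a0 b0 * swap a2 b2) = cycleCount ς := by
      have := (key_nsc hab2 hA).1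
      omega
    have k3 : cycleCount (ς * swap a0 b0 * swap a2 b2 * swap a1 b1)
        = cycleCount ς + 1 := by
      have e : ς * swap a0 b0 * swap a2 b2 * swap a1 b1
          = ς * swap a0 b0 * swap a1 b1 * swap a2 b2 := by
        rw [mul_assoc (ς * swap a0 b0), c21, ← mul_assoc]
      rw [e]
      exact h3
    refine ⟨Equiv.swap 1 2, ?_, ?_, ?_⟩
    · have e0 : ((Equiv.swap 1 2 : Perm (Fin 3))) 0 = 0 := by decide
      rw [e0, ht0]
      exact h1
    · have e0 : ((Equiv.swap 1 2 : Perm (Fin 3))) 0 = 0 := by decide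
      have e1 : ((Equiv.swap 1 2 : Perm (Fin 3))) 1 = 2 := by decide
      rw [e0, e1, ht0, ht2]
      exact k2
    · have e0 : ((Equiv.swap 1 2 : Perm (Fin 3))) 0 = 0 := by decide
      have e1 : ((Equiv.swap 1 2 : Perm (Fin 3))) 1 = 2 := by decide
      have e2 : ((Equiv.swap 1 2 : Perm (Fin 3))) 2 = 1 := by decide
      rw [e0, e1, e2, ht0, ht1, ht2]
      exact k3

end Stmt16

theorem stmt16 (q : ℕ) (hq : 6 ≤ q) (ς : Equiv.Perm (Fin q))
    (τ : Fin 3 → Equiv.Perm (Fin q))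
    (hswap : ∀ i, (τ i).IsSwap)
    (hdisj : ∀ i j, i ≠ j → (τ i).Disjoint (τ j))
    (h1 : cycleCount (ς * τ 0) = cycleCount ς + 1)
    (h2 : cycleCount (ς * τ 0 * τ 1) = cycleCount ς + 2)
    (h3 : cycleCount (ς * τ 0 * τ 1 * τ 2) = cycleCount ς + 1) :
    ∃ π : Equiv.Perm (Fin 3),
      cycleCount (ς * τ (π 0)) = cycleCount ς + 1 ∧
      cycleCount (ς * τ (π 0) * τ (π 1)) = cycleCount ς ∧
      cycleCount (ς * τ (π 0) * τ (π 1) * τ (π 2)) = cycleCount ς + 1 :=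
  Stmt16.main q ς τ hswap hdisj h1 h2 h3
end
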